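/- arXiv:2202.03594 — 5 statements merged into one kernel-verified Lean document; each statement's English description precedes it below -/
import Mathlib

section
/- Let 1/2 < t < 1. There exists a constant C = C(t) > 0 such that for every natural number M ≥ C there exists a natural number N₀ with the following property. For every natural number n₀ ≥ N₀ and every rectangle R whose dimensions satisfy M·n₀^{-t} ≤ w(R) ≤ h(R) ≤ 3M·n₀^{-t}, there exist a natural number n₀' with n₀ + M²/C ≤ n₀' ≤ n₀ + C·M² and a perfect packing of R by the squares of sidelength n^{-t} for n₀ ≤ n < n₀' (one square of each such sidelength) together with a finite family ℛ of additional rectangles: all squares and rectangles of the packing lie in R, have pairwise disjoint interiors, cover R up to a Lebesgue-null set, every rectangle in ℛ has width at most C·n₀^{-t}, and the total perimeter satisfies ∑_{R'∈ℛ} 2(w(R') + h(R')) ≤ C·M·n₀^{-t}. -/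
open MeasureTheory Set

/-- The closed axis-parallel rectangle with bottom-left corner `(x, y)`,
horizontal sidelength `w` and vertical sidelength `h`. -/
def Box (x y w h : ℝ) : Set (ℝ × ℝ) := Set.Icc x (x + w) ×ˢ Set.Icc y (y + h)

namespace EffPack


lemma box_interior (x y w h : ℝ) :
    interior (Box x y w h) = Set.Ioo x (x + w) ×ˢ Set.Ioo y (y + h) := by
  rw [Box, interior_prod_eq, interior_Icc, interior_Icc]

lemma box_disj_x {x1 y1 w1 h1 x2 y2 w2 h2 : ℝ} (h : x1 + w1 ≤ x2) :
    Disjoint (interior (Box x1 y1 w1 h1)) (interior (Box x2 y2 w2 h2)) := by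
  rw [Set.disjoint_left, box_interior, box_interior]
  rintro ⟨a, b⟩ ⟨ha1, _⟩ ⟨ha2, _⟩
  simp only [Set.mem_Ioo] at *
  linarith [ha1.2, ha2.1]

lemma box_disj_y {x1 y1 w1 h1 x2 y2 w2 h2 : ℝ} (h : y1 + h1 ≤ y2) :
    Disjoint (interior (Box x1 y1 w1 h1)) (interior (Box x2 y2 w2 h2)) := by
  rw [Set.disjoint_left, box_interior, box_interior]
  rintro ⟨a, b⟩ ⟨_, hb1⟩ ⟨_, hb2⟩
  simp only [Set.mem_Ioo] at *
  linarith [hb1.2, hb2.1]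

lemma box_subset {X Y w h x y w' h' : ℝ} (h1 : X ≤ x) (h2 : x + w' ≤ X + w)
    (h3 : Y ≤ y) (h4 : y + h' ≤ Y + h) : Box x y w' h' ⊆ Box X Y w h :=
  Set.prod_mono (Set.Icc_subset_Icc h1 h2) (Set.Icc_subset_Icc h3 h4)

lemma box_mem {x y w h : ℝ} {a b : ℝ} (h1 : x ≤ a) (h2 : a ≤ x + w) (h3 : y ≤ b)
    (h4 : b ≤ y + h) : (a, b) ∈ Box x y w h := ⟨⟨h1, h2⟩, ⟨h3, h4⟩⟩

lemma box_interior_empty {x y w h : ℝ} (hw : w ≤ 0) : interior (Box x y w h) = ∅ := by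
  rw [box_interior]
  have : Set.Ioo x (x+w) = ∅ := Set.Ioo_eq_empty (by linarith)
  rw [this, Set.empty_prod]


lemma prod4_le {a b c d S : ℝ} (h0a : 0 ≤ a) (h0b : 0 ≤ b) (h0c : 0 ≤ c) (h0d : 0 ≤ d)
    (ha : a ≤ S) (hb : b ≤ S) (hc : c ≤ S) (hd : d ≤ S) : a*b*c*d ≤ S^4 := by
  have hS : 0 ≤ S := le_trans h0a ha
  have h1 : a*b ≤ S*S := mul_le_mul ha hb h0b hS
  have h2 : c*d ≤ S*S := mul_le_mul hc hd h0d hS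
  have h3 : (a*b)*(c*d) ≤ (S*S)*(S*S) :=
    mul_le_mul h1 h2 (mul_nonneg h0c h0d) (mul_nonneg hS hS)
  nlinarith [h3]


noncomputable def side (t : ℝ) (n : ℕ) : ℝ := (n : ℝ) ^ (-t)

lemma side_pos {t : ℝ} {n : ℕ} (hn : 0 < n) : 0 < side t n :=
  Real.rpow_pos_of_pos (by exact_mod_cast hn) _

lemma side_nonneg {t : ℝ} {n : ℕ} : 0 ≤ side t n :=
  Real.rpow_nonneg (by positivity) _

lemma side_anti {t : ℝ} (ht : 0 ≤ t) {m n : ℕ} (hm : 0 < m) (hmn : m ≤ n) :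
    side t n ≤ side t m := by
  unfold side
  rw [Real.rpow_neg (by positivity), Real.rpow_neg (by positivity)]
  have h1 : (0:ℝ) < (m:ℝ) ^ t := Real.rpow_pos_of_pos (by exact_mod_cast hm) _
  have h2 : (m:ℝ) ^ t ≤ (n:ℝ) ^ t :=
    Real.rpow_le_rpow (by positivity) (by exact_mod_cast hmn) ht
  exact inv_anti₀ h1 h2

lemma side_diff_one {t : ℝ} (ht0 : 0 < t) (ht1 : t ≤ 1) {n₀ k : ℕ} (h0 : 0 < n₀)
    (h : n₀ ≤ k) : side t k - side t (k+1) ≤ (n₀:ℝ) ^ (-t-1) := by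
  have hk0 : 0 < k := lt_of_lt_of_le h0 h
  have hk : (0:ℝ) < (k:ℝ) := by exact_mod_cast hk0
  have hn0 : (0:ℝ) < (n₀:ℝ) := by exact_mod_cast h0
  have hk1 : (0:ℝ) < (k:ℝ) + 1 := by linarith
  have h1 : (k:ℝ) ^ (1-t) ≤ ((k:ℝ)+1) ^ (1-t) :=
    Real.rpow_le_rpow (le_of_lt hk) (by linarith) (by linarith)
  have e1 : (k:ℝ) ^ (1-t) = (k:ℝ) * (k:ℝ) ^ (-t) := by
    rw [show (1-t) = 1 + (-t) by ring, Real.rpow_add hk, Real.rpow_one]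
  have e2 : ((k:ℝ)+1) ^ (1-t) = ((k:ℝ)+1) * ((k:ℝ)+1) ^ (-t) := by
    rw [show (1-t) = 1 + (-t) by ring, Real.rpow_add hk1, Real.rpow_one]
  have kpos : (0:ℝ) < (k:ℝ) ^ (-t) := Real.rpow_pos_of_pos hk _
  have key : (k:ℝ) ^ (-t) * ((k:ℝ)/((k:ℝ)+1)) ≤ ((k:ℝ)+1) ^ (-t) := by
    rw [mul_div_assoc', div_le_iff₀ hk1]
    nlinarith [e1, e2, h1]
  have hsk : side t (k+1) = ((k:ℝ)+1) ^ (-t) := by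
    unfold side; push_cast; ring_nf
  have hstep : side t k - side t (k+1) ≤ (k:ℝ)^(-t) * (1/((k:ℝ)+1)) := by
    unfold side at hsk ⊢
    rw [hsk]
    have : (k:ℝ)^(-t) - (k:ℝ)^(-t) * ((k:ℝ)/((k:ℝ)+1)) = (k:ℝ)^(-t) * (1/((k:ℝ)+1)) := by
      field_simp; ring
    linarith [key]
  have h2 : (k:ℝ)^(-t) ≤ (n₀:ℝ)^(-t) := side_anti (le_of_lt ht0) h0 h
  have h3 : 1/((k:ℝ)+1) ≤ 1/(n₀:ℝ) := by
    apply one_div_le_one_div_of_le hn0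
    have : (n₀:ℝ) ≤ (k:ℝ) := by exact_mod_cast h
    linarith
  have h4 : (n₀:ℝ)^(-t-1) = (n₀:ℝ)^(-t) * (1/(n₀:ℝ)) := by
    rw [show (-t-1) = (-t) + (-1) by ring, Real.rpow_add hn0, Real.rpow_neg_one]
    rw [one_div]
  calc side t k - side t (k+1) ≤ (k:ℝ)^(-t) * (1/((k:ℝ)+1)) := hstep
    _ ≤ (n₀:ℝ)^(-t) * (1/(n₀:ℝ)) := by
        apply mul_le_mul h2 h3 (by positivity) (le_of_lt (Real.rpow_pos_of_pos hn0 _))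
    _ = (n₀:ℝ)^(-t-1) := h4.symm

lemma side_diff {t : ℝ} (ht0 : 0 < t) (ht1 : t ≤ 1) {n₀ : ℕ} (h0 : 0 < n₀)
    {m n : ℕ} (hm : n₀ ≤ m) (hmn : m ≤ n) :
    side t m - side t n ≤ ((n:ℝ) - (m:ℝ)) * (n₀:ℝ) ^ (-t-1) := by
  induction n, hmn using Nat.le_induction with
  | base => simp
  | succ n hn ih =>
      have h1 : side t n - side t (n+1) ≤ (n₀:ℝ) ^ (-t-1) :=
        side_diff_one ht0 ht1 h0 (le_trans hm hn)
      push_cast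
      push_cast at ih
      nlinarith [ih]

/-- index of square in column j (from left), level l (from bottom) -/
def idx (n₀ p L j l : ℕ) : ℕ := n₀ + (p - 1 - j) * L + l

noncomputable def aa (t : ℝ) (n₀ p L : ℕ) (j l : ℕ) : ℝ := side t (idx n₀ p L j l)

noncomputable def SS (t : ℝ) (n₀ p L : ℕ) (j l : ℕ) : ℝ :=
  ∑ i ∈ Finset.range j, aa t n₀ p L i l

noncomputable def YY (t : ℝ) (n₀ p L : ℕ) (j l : ℕ) : ℝ :=
  ∑ i ∈ Finset.range l, aa t n₀ p L j i

set_option linter.unusedSectionVars false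
section Grid

variable {t : ℝ} {n₀ p L : ℕ}

lemma idx_pos (h0 : 0 < n₀) {j l : ℕ} : 0 < idx n₀ p L j l := by
  unfold idx; omega

lemma idx_ge (j l : ℕ) : n₀ ≤ idx n₀ p L j l := by unfold idx; omega

lemma idx_le (hp : 0 < p) {j l : ℕ} (hl : l ≤ L) : idx n₀ p L j l ≤ n₀ + p * L := by
  unfold idx
  have h1 : (p - 1 - j) ≤ p - 1 := by omega
  have h2 : (p - 1 - j) * L ≤ (p-1) * L := Nat.mul_le_mul_right _ h1
  have h3 : (p-1) * L + L = p * L := by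
    cases p with
    | zero => omega
    | succ q => simp [Nat.succ_sub_one, Nat.succ_mul]
  omega

variable (ht0 : 0 < t) (ht1 : t ≤ 1) (h0 : 0 < n₀) (hp : 0 < p) (hL : 0 < L)

include ht0 h0 in
lemma aa_pos {j l : ℕ} : 0 < aa t n₀ p L j l := side_pos (idx_pos h0)

include ht0 h0 in
lemma aa_le_s {j l : ℕ} : aa t n₀ p L j l ≤ side t n₀ :=
  side_anti (le_of_lt ht0) h0 (idx_ge j l)

include ht0 h0 hp in
lemma sm_le_aa {j l : ℕ} (hl : l ≤ L) : side t (n₀ + p * L) ≤ aa t n₀ p L j l :=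
  side_anti (le_of_lt ht0) (idx_pos h0) (idx_le hp hl)

include ht0 h0 in
lemma aa_anti_l {j l l' : ℕ} (h : l ≤ l') : aa t n₀ p L j l' ≤ aa t n₀ p L j l := by
  apply side_anti (le_of_lt ht0) (idx_pos h0)
  unfold idx; omega

include ht0 h0 in
lemma aa_mono_j {j j' l : ℕ} (h : j ≤ j') : aa t n₀ p L j l ≤ aa t n₀ p L j' l := by
  apply side_anti (le_of_lt ht0) (idx_pos h0)
  unfold idx
  have : (p - 1 - j') * L ≤ (p - 1 - j) * L := Nat.mul_le_mul_right _ (by omega)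
  omega

include ht0 ht1 h0 in
lemma aa_step_l {j l : ℕ} :
    aa t n₀ p L j l - aa t n₀ p L j (l+1) ≤ (n₀:ℝ) ^ (-t-1) := by
  have h : idx n₀ p L j (l+1) = idx n₀ p L j l + 1 := by unfold idx; omega
  have h2 := side_diff_one ht0 ht1 h0 (idx_ge (n₀ := n₀) (p := p) (L := L) j l)
  unfold aa; rw [h]; exact h2

include ht0 ht1 h0 in
lemma aa_step_j {j l : ℕ} (hj : j + 1 ≤ p - 1) :
    aa t n₀ p L (j+1) l - aa t n₀ p L j l ≤ (L:ℝ) * (n₀:ℝ) ^ (-t-1) := by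
  have h : idx n₀ p L j l = idx n₀ p L (j+1) l + L := by
    unfold idx
    have h1 : p - 1 - j = (p - 1 - (j+1)) + 1 := by omega
    rw [h1, Nat.succ_mul]; ring
  have h3 : side t (idx n₀ p L (j+1) l) - side t (idx n₀ p L (j+1) l + L)
      ≤ (((idx n₀ p L (j+1) l + L : ℕ) : ℝ) - ((idx n₀ p L (j+1) l : ℕ) :ℝ)) * (n₀:ℝ)^(-t-1) :=
    side_diff ht0 ht1 h0 (idx_ge _ _) (by omega)
  unfold aa
  rw [h]
  have h4 : ((idx n₀ p L (j+1) l + L : ℕ) : ℝ) - ((idx n₀ p L (j+1) l : ℕ):ℝ) = (L:ℝ) := by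
    push_cast; ring
  rw [h4] at h3
  exact h3


/-! ### partial sum lemmas -/

lemma SS_zero {l : ℕ} : SS t n₀ p L 0 l = 0 := by simp [SS]

lemma YY_zero {j : ℕ} : YY t n₀ p L j 0 = 0 := by simp [YY]

lemma SS_succ {j l : ℕ} : SS t n₀ p L (j+1) l = SS t n₀ p L j l + aa t n₀ p L j l := by
  simp [SS, Finset.sum_range_succ]

lemma YY_succ {j l : ℕ} : YY t n₀ p L j (l+1) = YY t n₀ p L j l + aa t n₀ p L j l := by
  simp [YY, Finset.sum_range_succ]

include ht0 h0 in
lemma SS_nonneg {j l : ℕ} : 0 ≤ SS t n₀ p L j l :=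
  Finset.sum_nonneg fun i _ => le_of_lt (aa_pos ht0 h0)

include ht0 h0 in
lemma YY_nonneg {j l : ℕ} : 0 ≤ YY t n₀ p L j l :=
  Finset.sum_nonneg fun i _ => le_of_lt (aa_pos ht0 h0)

include ht0 h0 in
lemma SS_mono_j {j j' l : ℕ} (h : j ≤ j') : SS t n₀ p L j l ≤ SS t n₀ p L j' l := by
  apply Finset.sum_le_sum_of_subset_of_nonneg (Finset.range_subset_range.mpr h)
  exact fun i _ _ => le_of_lt (aa_pos ht0 h0)

include ht0 h0 in
lemma YY_mono_l {j l l' : ℕ} (h : l ≤ l') : YY t n₀ p L j l ≤ YY t n₀ p L j l' := by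
  apply Finset.sum_le_sum_of_subset_of_nonneg (Finset.range_subset_range.mpr h)
  exact fun i _ _ => le_of_lt (aa_pos ht0 h0)

include ht0 h0 in
lemma SS_anti_l {j l l' : ℕ} (h : l ≤ l') : SS t n₀ p L j l' ≤ SS t n₀ p L j l :=
  Finset.sum_le_sum fun i _ => aa_anti_l ht0 h0 h

include ht0 h0 in
lemma YY_mono_j {j j' l : ℕ} (h : j ≤ j') : YY t n₀ p L j l ≤ YY t n₀ p L j' l :=
  Finset.sum_le_sum fun i _ => aa_mono_j ht0 h0 h

include ht0 h0 in
lemma SS_le {j l : ℕ} : SS t n₀ p L j l ≤ (j:ℝ) * side t n₀ := by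
  calc SS t n₀ p L j l ≤ ∑ i ∈ Finset.range j, side t n₀ :=
        Finset.sum_le_sum fun i _ => aa_le_s ht0 h0
    _ = (j:ℝ) * side t n₀ := by simp [mul_comm]

include ht0 h0 in
lemma YY_le {j l : ℕ} : YY t n₀ p L j l ≤ (l:ℝ) * side t n₀ := by
  calc YY t n₀ p L j l ≤ ∑ i ∈ Finset.range l, side t n₀ :=
        Finset.sum_le_sum fun i _ => aa_le_s ht0 h0
    _ = (l:ℝ) * side t n₀ := by simp [mul_comm]

include ht0 h0 hp in
lemma SS_ge {j l : ℕ} (hl : l ≤ L) : (j:ℝ) * side t (n₀ + p*L) ≤ SS t n₀ p L j l := by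
  calc (j:ℝ) * side t (n₀ + p*L) = ∑ i ∈ Finset.range j, side t (n₀ + p*L) := by simp [mul_comm]
    _ ≤ SS t n₀ p L j l := Finset.sum_le_sum fun i _ => sm_le_aa ht0 h0 hp hl

include ht0 h0 hp in
lemma YY_ge {j l : ℕ} (hl : l ≤ L) : (l:ℝ) * side t (n₀ + p*L) ≤ YY t n₀ p L j l := by
  calc (l:ℝ) * side t (n₀ + p*L) = ∑ i ∈ Finset.range l, side t (n₀ + p*L) := by simp [mul_comm]
    _ ≤ YY t n₀ p L j l := Finset.sum_le_sum fun i hi => sm_le_aa ht0 h0 hp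
        (le_trans (le_of_lt (Finset.mem_range.mp hi)) hl)


/-! ### smallness consequences -/

variable (hBIG : ((p:ℝ)+(L:ℝ))^4 * (n₀:ℝ) ^ (-t-1) ≤ side t (n₀ + p*L))

include h0 in
lemma B_nonneg : (0:ℝ) ≤ (n₀:ℝ) ^ (-t-1) := Real.rpow_nonneg (by positivity) _

include h0 hp hL hBIG in
lemma pB_le_sm : (p:ℝ) * (n₀:ℝ) ^ (-t-1) ≤ side t (n₀ + p*L) := by
  refine le_trans ?_ hBIG
  have hB := B_nonneg (t := t) h0
  have h1 : (1:ℝ) ≤ (p:ℝ) + (L:ℝ) := by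
    have : (1:ℝ) ≤ (p:ℝ) := by exact_mod_cast hp
    have : (0:ℝ) ≤ (L:ℝ) := by positivity
    linarith
  have h2 : (p:ℝ)+(L:ℝ) ≤ ((p:ℝ)+(L:ℝ))^4 := le_self_pow₀ h1 (by norm_num)
  have h3 : (p:ℝ) ≤ ((p:ℝ)+(L:ℝ))^4 := by
    have : (0:ℝ) ≤ (L:ℝ) := by positivity
    linarith
  exact mul_le_mul_of_nonneg_right h3 hB

include h0 hp hL hBIG in
lemma LLB_le_sm : (L:ℝ) * (L:ℝ) * (n₀:ℝ) ^ (-t-1) ≤ side t (n₀ + p*L) := by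
  have hB := B_nonneg (t := t) h0
  have hp1 : (0:ℝ) ≤ (p:ℝ) := by positivity
  have hL1 : (1:ℝ) ≤ (L:ℝ) := by exact_mod_cast hL
  have h1 : (1:ℝ) ≤ (p:ℝ) + (L:ℝ) := by
    have : (1:ℝ) ≤ (L:ℝ) := hL1
    linarith
  have h2 : ((p:ℝ)+(L:ℝ))^2 ≤ ((p:ℝ)+(L:ℝ))^4 := pow_le_pow_right₀ (by linarith) (by norm_num)
  have h3 : (L:ℝ) * (L:ℝ) ≤ ((p:ℝ)+(L:ℝ))^2 := by nlinarith
  calc (L:ℝ) * (L:ℝ) * (n₀:ℝ) ^ (-t-1) ≤ ((p:ℝ)+(L:ℝ))^4 * (n₀:ℝ) ^ (-t-1) := by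
        apply mul_le_mul_of_nonneg_right (le_trans h3 h2) hB
    _ ≤ side t (n₀ + p*L) := hBIG

include ht0 ht1 h0 in
lemma SS_sub {j l : ℕ} (hj : j ≤ p) :
    SS t n₀ p L j l - SS t n₀ p L j (l+1) ≤ (p:ℝ) * (n₀:ℝ) ^ (-t-1) := by
  have h1 : SS t n₀ p L j l - SS t n₀ p L j (l+1)
      = ∑ i ∈ Finset.range j, (aa t n₀ p L i l - aa t n₀ p L i (l+1)) := by
    rw [Finset.sum_sub_distrib]; rfl
  rw [h1]
  calc ∑ i ∈ Finset.range j, (aa t n₀ p L i l - aa t n₀ p L i (l+1))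
      ≤ ∑ i ∈ Finset.range j, (n₀:ℝ) ^ (-t-1) :=
        Finset.sum_le_sum fun i _ => aa_step_l ht0 ht1 h0
    _ = (j:ℝ) * (n₀:ℝ) ^ (-t-1) := by simp [mul_comm]
    _ ≤ (p:ℝ) * (n₀:ℝ) ^ (-t-1) := by
        have := B_nonneg (t := t) h0
        have : (j:ℝ) ≤ (p:ℝ) := by exact_mod_cast hj
        nlinarith [B_nonneg (t := t) h0]

include ht0 ht1 h0 in
lemma YY_sub {j l : ℕ} (hj : j + 1 ≤ p - 1) (hl : l ≤ L) :
    YY t n₀ p L (j+1) l - YY t n₀ p L j l ≤ (L:ℝ) * (L:ℝ) * (n₀:ℝ) ^ (-t-1) := by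
  have h1 : YY t n₀ p L (j+1) l - YY t n₀ p L j l
      = ∑ i ∈ Finset.range l, (aa t n₀ p L (j+1) i - aa t n₀ p L j i) := by
    rw [Finset.sum_sub_distrib]; rfl
  rw [h1]
  calc ∑ i ∈ Finset.range l, (aa t n₀ p L (j+1) i - aa t n₀ p L j i)
      ≤ ∑ i ∈ Finset.range l, (L:ℝ) * (n₀:ℝ) ^ (-t-1) :=
        Finset.sum_le_sum fun i _ => aa_step_j ht0 ht1 h0 hj
    _ = (l:ℝ) * ((L:ℝ) * (n₀:ℝ) ^ (-t-1)) := by simp [mul_comm]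
    _ ≤ (L:ℝ) * (L:ℝ) * (n₀:ℝ) ^ (-t-1) := by
        have hB := B_nonneg (t := t) h0
        have hll : (l:ℝ) ≤ (L:ℝ) := by exact_mod_cast hl
        have hL0 : (0:ℝ) ≤ (L:ℝ) := by positivity
        have := mul_le_mul_of_nonneg_right hll (mul_nonneg hL0 hB)
        nlinarith [this]

include ht0 ht1 h0 hp hL hBIG in
lemma SS_crack {j l : ℕ} (hj : j ≤ p - 1) (hl : l + 1 ≤ L) :
    SS t n₀ p L j l ≤ SS t n₀ p L (j+1) (l+1) := by
  have h1 : SS t n₀ p L j l - SS t n₀ p L j (l+1) ≤ (p:ℝ) * (n₀:ℝ) ^ (-t-1) :=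
    SS_sub ht0 ht1 h0 (by omega)
  have h2 := pB_le_sm (t := t) h0 hp hL hBIG
  have h3 : side t (n₀ + p*L) ≤ aa t n₀ p L j (l+1) := sm_le_aa ht0 h0 hp hl
  rw [SS_succ]
  linarith

include ht0 ht1 h0 hp hL hBIG in
lemma YY_drift {j l l' : ℕ} (hj : j + 1 ≤ p - 1) (hl : l < l') (hl' : l' ≤ L) :
    YY t n₀ p L (j+1) l ≤ YY t n₀ p L j l' := by
  have h1 : YY t n₀ p L (j+1) l - YY t n₀ p L j l ≤ (L:ℝ) * (L:ℝ) * (n₀:ℝ) ^ (-t-1) :=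
    YY_sub ht0 ht1 h0 hj (by omega)
  have h2 := LLB_le_sm (t := t) h0 hp hL hBIG
  have h3 : side t (n₀ + p*L) ≤ aa t n₀ p L j l := sm_le_aa ht0 h0 hp (by omega)
  have h4 : YY t n₀ p L j (l+1) ≤ YY t n₀ p L j l' := YY_mono_l ht0 h0 hl
  rw [YY_succ] at h4
  linarith


end Grid

/-! ### the pieces -/

noncomputable def sqB (t : ℝ) (n₀ p L : ℕ) (X Y : ℝ) (j l : ℕ) : Set (ℝ × ℝ) :=
  Box (X + SS t n₀ p L j l) (Y + YY t n₀ p L j l) (aa t n₀ p L j l) (aa t n₀ p L j l)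

noncomputable def crB (t : ℝ) (n₀ p L : ℕ) (X Y : ℝ) (j l : ℕ) : Set (ℝ × ℝ) :=
  Box (X + SS t n₀ p L j (l+1)) (Y + YY t n₀ p L (j-1) (l+1))
    (SS t n₀ p L j l - SS t n₀ p L j (l+1))
    (YY t n₀ p L j (l+1) - YY t n₀ p L (j-1) (l+1))

noncomputable def rrB (t : ℝ) (n₀ p L : ℕ) (X Y w : ℝ) (l : ℕ) : Set (ℝ × ℝ) :=
  Box (X + SS t n₀ p L p l) (Y + YY t n₀ p L (p-1) l)
    (w - SS t n₀ p L p l) (aa t n₀ p L (p-1) l)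

noncomputable def tpB (t : ℝ) (n₀ p L : ℕ) (X Y h : ℝ) (j : ℕ) : Set (ℝ × ℝ) :=
  Box (X + SS t n₀ p L j L) (Y + YY t n₀ p L j L)
    (aa t n₀ p L j L) (h - YY t n₀ p L j L)

noncomputable def coB (t : ℝ) (n₀ p L : ℕ) (X Y w h : ℝ) : Set (ℝ × ℝ) :=
  Box (X + SS t n₀ p L p L) (Y + YY t n₀ p L (p-1) L)
    (w - SS t n₀ p L p L) (h - YY t n₀ p L (p-1) L)

section Disj

variable {t : ℝ} {n₀ p L : ℕ} {X Y w h : ℝ}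
variable (ht0 : 0 < t) (ht1 : t ≤ 1) (h0 : 0 < n₀) (hp : 0 < p) (hL : 0 < L)
variable (hBIG : ((p:ℝ)+(L:ℝ))^4 * (n₀:ℝ) ^ (-t-1) ≤ side t (n₀ + p*L))

set_option linter.unusedSectionVars false

include ht0 h0 in
lemma disj_sq_sq {j l j' l' : ℕ} (hne : (j, l) ≠ (j', l')) :
    Disjoint (interior (sqB t n₀ p L X Y j l)) (interior (sqB t n₀ p L X Y j' l')) := by
  have key : ∀ j l j' l' : ℕ, l < l' →
      Disjoint (interior (sqB t n₀ p L X Y j l)) (interior (sqB t n₀ p L X Y j' l')) := by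
    intro j l j' l' hll
    rcases le_or_gt j j' with hj | hj
    · apply box_disj_y
      have e : YY t n₀ p L j (l+1) = YY t n₀ p L j l + aa t n₀ p L j l := YY_succ
      have h1 : YY t n₀ p L j (l+1) ≤ YY t n₀ p L j' (l+1) := YY_mono_j ht0 h0 hj
      have h2 : YY t n₀ p L j' (l+1) ≤ YY t n₀ p L j' l' := YY_mono_l ht0 h0 (by omega)
      linarith
    · apply (box_disj_x ?_).symm
      have e : SS t n₀ p L (j'+1) l' = SS t n₀ p L j' l' + aa t n₀ p L j' l' := SS_succ
      have h1 : SS t n₀ p L (j'+1) l' ≤ SS t n₀ p L j l' := SS_mono_j ht0 h0 (by omega)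
      have h2 : SS t n₀ p L j l' ≤ SS t n₀ p L j l := SS_anti_l ht0 h0 (by omega)
      linarith
  rcases Nat.lt_trichotomy l l' with hll | hll | hll
  · exact key _ _ _ _ hll
  · subst hll
    have hjj : j ≠ j' := by simpa using hne
    rcases Nat.lt_trichotomy j j' with hj | hj | hj
    · apply box_disj_x
      have e : SS t n₀ p L (j+1) l = SS t n₀ p L j l + aa t n₀ p L j l := SS_succ
      have h1 : SS t n₀ p L (j+1) l ≤ SS t n₀ p L j' l := SS_mono_j ht0 h0 (by omega)
      linarith
    · exact absurd hj hjj
    · apply (box_disj_x ?_).symm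
      have e : SS t n₀ p L (j'+1) l = SS t n₀ p L j' l + aa t n₀ p L j' l := SS_succ
      have h1 : SS t n₀ p L (j'+1) l ≤ SS t n₀ p L j l := SS_mono_j ht0 h0 (by omega)
      linarith
  · exact (key _ _ _ _ hll).symm

include ht0 h0 in
lemma disj_sq_cr {j l j' l' : ℕ} (hj' : j' ≤ p - 1) :
    Disjoint (interior (sqB t n₀ p L X Y j l)) (interior (crB t n₀ p L X Y j' l')) := by
  rcases Nat.lt_trichotomy l' l with hll | hll | hll
  · rcases le_or_gt j' j with hj | hj
    · -- crack below square
      apply (box_disj_y ?_).symm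
      have e : YY t n₀ p L j' (l'+1) - YY t n₀ p L (j'-1) (l'+1)
          + (Y + YY t n₀ p L (j'-1) (l'+1)) = Y + YY t n₀ p L j' (l'+1) := by ring
      have h1 : YY t n₀ p L j' (l'+1) ≤ YY t n₀ p L j (l'+1) := YY_mono_j ht0 h0 hj
      have h2 : YY t n₀ p L j (l'+1) ≤ YY t n₀ p L j l := YY_mono_l ht0 h0 (by omega)
      linarith
    · -- crack strictly right, below row: square right ≤ crack left
      apply box_disj_x
      have e : SS t n₀ p L (j+1) l = SS t n₀ p L j l + aa t n₀ p L j l := SS_succ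
      have h1 : SS t n₀ p L (j+1) l ≤ SS t n₀ p L j' l := SS_mono_j ht0 h0 (by omega)
      have h2 : SS t n₀ p L j' l ≤ SS t n₀ p L j' (l'+1) := SS_anti_l ht0 h0 (by omega)
      linarith
  · rcases le_or_gt j' j with hj | hj
    · apply (box_disj_x ?_).symm
      have h1 : SS t n₀ p L j' l' ≤ SS t n₀ p L j l' := SS_mono_j ht0 h0 hj
      have e2 : SS t n₀ p L j l' = SS t n₀ p L j l := by rw [hll]
      linarith
    · apply box_disj_y
      have e : YY t n₀ p L j (l+1) = YY t n₀ p L j l + aa t n₀ p L j l := YY_succ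
      have h1 : YY t n₀ p L j (l+1) ≤ YY t n₀ p L (j'-1) (l+1) := YY_mono_j ht0 h0 (by omega)
      have e2 : YY t n₀ p L (j'-1) (l+1) = YY t n₀ p L (j'-1) (l'+1) := by rw [hll]
      linarith
  · rcases le_or_gt j' j with hj | hj
    · apply (box_disj_x ?_).symm
      have h1 : SS t n₀ p L j' l' ≤ SS t n₀ p L j l' := SS_mono_j ht0 h0 hj
      have h2 : SS t n₀ p L j l' ≤ SS t n₀ p L j l := SS_anti_l ht0 h0 (by omega)
      linarith
    · apply box_disj_y
      have e : YY t n₀ p L j (l+1) = YY t n₀ p L j l + aa t n₀ p L j l := YY_succ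
      have h1 : YY t n₀ p L j (l+1) ≤ YY t n₀ p L (j'-1) (l+1) := YY_mono_j ht0 h0 (by omega)
      have h2 : YY t n₀ p L (j'-1) (l+1) ≤ YY t n₀ p L (j'-1) (l'+1) := YY_mono_l ht0 h0 (by omega)
      linarith

include ht0 h0 in
lemma disj_sq_rr {j l l' : ℕ} (hj : j + 1 ≤ p) :
    Disjoint (interior (sqB t n₀ p L X Y j l)) (interior (rrB t n₀ p L X Y w l')) := by
  rcases le_or_gt l' l with hll | hll
  · apply box_disj_x
    have e : SS t n₀ p L (j+1) l = SS t n₀ p L j l + aa t n₀ p L j l := SS_succ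
    have h1 : SS t n₀ p L (j+1) l ≤ SS t n₀ p L p l := SS_mono_j ht0 h0 hj
    have h2 : SS t n₀ p L p l ≤ SS t n₀ p L p l' := SS_anti_l ht0 h0 hll
    linarith
  · apply box_disj_y
    have e : YY t n₀ p L j (l+1) = YY t n₀ p L j l + aa t n₀ p L j l := YY_succ
    have h1 : YY t n₀ p L j (l+1) ≤ YY t n₀ p L (p-1) (l+1) := YY_mono_j ht0 h0 (by omega)
    have h2 : YY t n₀ p L (p-1) (l+1) ≤ YY t n₀ p L (p-1) l' := YY_mono_l ht0 h0 (by omega)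
    linarith

include ht0 h0 in
lemma disj_sq_tp {j l j' : ℕ} (hl : l + 1 ≤ L) :
    Disjoint (interior (sqB t n₀ p L X Y j l)) (interior (tpB t n₀ p L X Y h j')) := by
  rcases le_or_gt j j' with hj | hj
  · apply box_disj_y
    have e : YY t n₀ p L j (l+1) = YY t n₀ p L j l + aa t n₀ p L j l := YY_succ
    have h1 : YY t n₀ p L j (l+1) ≤ YY t n₀ p L j' (l+1) := YY_mono_j ht0 h0 hj
    have h2 : YY t n₀ p L j' (l+1) ≤ YY t n₀ p L j' L := YY_mono_l ht0 h0 hl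
    linarith
  · apply (box_disj_x ?_).symm
    have e : SS t n₀ p L (j'+1) L = SS t n₀ p L j' L + aa t n₀ p L j' L := SS_succ
    have h1 : SS t n₀ p L (j'+1) L ≤ SS t n₀ p L j L := SS_mono_j ht0 h0 (by omega)
    have h2 : SS t n₀ p L j L ≤ SS t n₀ p L j l := SS_anti_l ht0 h0 (by omega)
    linarith

include ht0 h0 in
lemma disj_sq_co {j l : ℕ} (hj : j ≤ p - 1) (hl : l + 1 ≤ L) :
    Disjoint (interior (sqB t n₀ p L X Y j l)) (interior (coB t n₀ p L X Y w h)) := by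
  apply box_disj_y
  have e : YY t n₀ p L j (l+1) = YY t n₀ p L j l + aa t n₀ p L j l := YY_succ
  have h1 : YY t n₀ p L j (l+1) ≤ YY t n₀ p L (p-1) (l+1) := YY_mono_j ht0 h0 hj
  have h2 : YY t n₀ p L (p-1) (l+1) ≤ YY t n₀ p L (p-1) L := YY_mono_l ht0 h0 hl
  linarith


lemma crB_zero_interior {l : ℕ} : interior (crB t n₀ p L X Y 0 l) = ∅ := by
  apply box_interior_empty
  simp [SS_zero]

include ht0 ht1 h0 hp hL hBIG in
lemma disj_cr_cr {j l j' l' : ℕ} (hj : j ≤ p - 1) (hj' : j' ≤ p - 1)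
    (hl : l + 1 ≤ L) (hl' : l' + 1 ≤ L) (hne : (j, l) ≠ (j', l')) :
    Disjoint (interior (crB t n₀ p L X Y j l)) (interior (crB t n₀ p L X Y j' l')) := by
  have key : ∀ j l j' l' : ℕ, j ≤ p - 1 → l + 1 ≤ L → l' + 1 ≤ L → l < l' →
      Disjoint (interior (crB t n₀ p L X Y j l)) (interior (crB t n₀ p L X Y j' l')) := by
    intro j l j' l' hj hl hl' hll
    rcases Nat.lt_trichotomy j j' with hjj | hjj | hjj
    · apply box_disj_y
      have h1 : YY t n₀ p L j (l+1) ≤ YY t n₀ p L (j'-1) (l+1) := YY_mono_j ht0 h0 (by omega)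
      have h2 : YY t n₀ p L (j'-1) (l+1) ≤ YY t n₀ p L (j'-1) (l'+1) := YY_mono_l ht0 h0 (by omega)
      linarith
    · -- same column: drift lemma
      rcases Nat.eq_zero_or_pos j with hz | hz
      · subst hz; subst hjj
        rw [crB_zero_interior]
        exact disjoint_bot_left
      · apply box_disj_y
        subst hjj
        have h1 : YY t n₀ p L ((j-1)+1) (l+1) ≤ YY t n₀ p L (j-1) (l'+1) :=
          YY_drift ht0 ht1 h0 hp hL hBIG (by omega) (by omega) (by omega)
        have e : (j-1)+1 = j := by omega
        rw [e] at h1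
        linarith
    · apply (box_disj_x ?_).symm
      have h1 : SS t n₀ p L j' l' ≤ SS t n₀ p L j l' := SS_mono_j ht0 h0 (by omega)
      have h2 : SS t n₀ p L j l' ≤ SS t n₀ p L j (l+1) := SS_anti_l ht0 h0 (by omega)
      linarith
  rcases Nat.lt_trichotomy l l' with hll | hll | hll
  · exact key _ _ _ _ hj hl hl' hll
  · -- same row, different column
    have hjj : j ≠ j' := by simp [hll] at hne; exact fun hc => hne (by omega)
    have key2 : ∀ j j' l : ℕ, j ≤ p - 1 → l + 1 ≤ L → j < j' →
        Disjoint (interior (crB t n₀ p L X Y j l)) (interior (crB t n₀ p L X Y j' l)) := by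
      intro j j' l hj hl hjj
      apply box_disj_x
      have h1 : SS t n₀ p L j l ≤ SS t n₀ p L (j+1) (l+1) :=
        SS_crack ht0 ht1 h0 hp hL hBIG hj hl
      have h2 : SS t n₀ p L (j+1) (l+1) ≤ SS t n₀ p L j' (l+1) := SS_mono_j ht0 h0 (by omega)
      linarith
    rcases Nat.lt_trichotomy j j' with hjj2 | hjj2 | hjj2
    · subst hll; exact key2 _ _ _ hj hl hjj2
    · exact absurd hjj2 hjj
    · subst hll; exact (key2 _ _ _ hj' hl hjj2).symm
  · exact (key _ _ _ _ hj' hl' hl hll).symm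

include ht0 h0 in
lemma disj_cr_rr {j l l' : ℕ} (hj : j ≤ p - 1) :
    Disjoint (interior (crB t n₀ p L X Y j l)) (interior (rrB t n₀ p L X Y w l')) := by
  rcases le_or_gt l' l with hll | hll
  · apply box_disj_x
    have h1 : SS t n₀ p L j l ≤ SS t n₀ p L p l := SS_mono_j ht0 h0 (by omega)
    have h2 : SS t n₀ p L p l ≤ SS t n₀ p L p l' := SS_anti_l ht0 h0 hll
    linarith
  · apply box_disj_y
    have h1 : YY t n₀ p L j (l+1) ≤ YY t n₀ p L (p-1) (l+1) := YY_mono_j ht0 h0 (by omega)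
    have h2 : YY t n₀ p L (p-1) (l+1) ≤ YY t n₀ p L (p-1) l' := YY_mono_l ht0 h0 (by omega)
    linarith

include ht0 h0 in
lemma disj_cr_tp {j l j' : ℕ} (hl : l + 1 ≤ L) :
    Disjoint (interior (crB t n₀ p L X Y j l)) (interior (tpB t n₀ p L X Y h j')) := by
  rcases le_or_gt j j' with hj | hj
  · apply box_disj_y
    have h1 : YY t n₀ p L j (l+1) ≤ YY t n₀ p L j' (l+1) := YY_mono_j ht0 h0 hj
    have h2 : YY t n₀ p L j' (l+1) ≤ YY t n₀ p L j' L := YY_mono_l ht0 h0 hl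
    linarith
  · apply (box_disj_x ?_).symm
    have e : SS t n₀ p L (j'+1) L = SS t n₀ p L j' L + aa t n₀ p L j' L := SS_succ
    have h1 : SS t n₀ p L (j'+1) L ≤ SS t n₀ p L j L := SS_mono_j ht0 h0 (by omega)
    have h2 : SS t n₀ p L j L ≤ SS t n₀ p L j (l+1) := SS_anti_l ht0 h0 (by omega)
    linarith

include ht0 h0 in
lemma disj_cr_co {j l : ℕ} (hj : j ≤ p - 1) (hl : l + 1 ≤ L) :
    Disjoint (interior (crB t n₀ p L X Y j l)) (interior (coB t n₀ p L X Y w h)) := by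
  apply box_disj_y
  have h1 : YY t n₀ p L j (l+1) ≤ YY t n₀ p L (p-1) (l+1) := YY_mono_j ht0 h0 hj
  have h2 : YY t n₀ p L (p-1) (l+1) ≤ YY t n₀ p L (p-1) L := YY_mono_l ht0 h0 hl
  linarith

include ht0 h0 in
lemma disj_rr_rr {l l' : ℕ} (hne : l ≠ l') :
    Disjoint (interior (rrB t n₀ p L X Y w l)) (interior (rrB t n₀ p L X Y w l')) := by
  have key : ∀ l l' : ℕ, l < l' →
      Disjoint (interior (rrB t n₀ p L X Y w l)) (interior (rrB t n₀ p L X Y w l')) := by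
    intro l l' hll
    apply box_disj_y
    have e : YY t n₀ p L (p-1) (l+1) = YY t n₀ p L (p-1) l + aa t n₀ p L (p-1) l := YY_succ
    have h1 : YY t n₀ p L (p-1) (l+1) ≤ YY t n₀ p L (p-1) l' := YY_mono_l ht0 h0 (by omega)
    linarith
  rcases Nat.lt_trichotomy l l' with hll | hll | hll
  · exact key _ _ hll
  · exact absurd hll hne
  · exact (key _ _ hll).symm

include ht0 h0 in
lemma disj_rr_tp {l j : ℕ} (hj : j + 1 ≤ p) (hl : l ≤ L) :
    Disjoint (interior (rrB t n₀ p L X Y w l)) (interior (tpB t n₀ p L X Y h j)) := by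
  apply (box_disj_x ?_).symm
  have e : SS t n₀ p L (j+1) L = SS t n₀ p L j L + aa t n₀ p L j L := SS_succ
  have h1 : SS t n₀ p L (j+1) L ≤ SS t n₀ p L p L := SS_mono_j ht0 h0 hj
  have h2 : SS t n₀ p L p L ≤ SS t n₀ p L p l := SS_anti_l ht0 h0 hl
  linarith

include ht0 h0 in
lemma disj_rr_co {l : ℕ} (hl : l + 1 ≤ L) :
    Disjoint (interior (rrB t n₀ p L X Y w l)) (interior (coB t n₀ p L X Y w h)) := by
  apply box_disj_y
  have e : YY t n₀ p L (p-1) (l+1) = YY t n₀ p L (p-1) l + aa t n₀ p L (p-1) l := YY_succ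
  have h1 : YY t n₀ p L (p-1) (l+1) ≤ YY t n₀ p L (p-1) L := YY_mono_l ht0 h0 hl
  linarith

include ht0 h0 in
lemma disj_tp_tp {j j' : ℕ} (hne : j ≠ j') :
    Disjoint (interior (tpB t n₀ p L X Y h j)) (interior (tpB t n₀ p L X Y h j')) := by
  have key : ∀ j j' : ℕ, j < j' →
      Disjoint (interior (tpB t n₀ p L X Y h j)) (interior (tpB t n₀ p L X Y h j')) := by
    intro j j' hjj
    apply box_disj_x
    have e : SS t n₀ p L (j+1) L = SS t n₀ p L j L + aa t n₀ p L j L := SS_succ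
    have h1 : SS t n₀ p L (j+1) L ≤ SS t n₀ p L j' L := SS_mono_j ht0 h0 (by omega)
    linarith
  rcases Nat.lt_trichotomy j j' with hjj | hjj | hjj
  · exact key _ _ hjj
  · exact absurd hjj hne
  · exact (key _ _ hjj).symm

include ht0 h0 in
lemma disj_tp_co {j : ℕ} (hj : j + 1 ≤ p) :
    Disjoint (interior (tpB t n₀ p L X Y h j)) (interior (coB t n₀ p L X Y w h)) := by
  apply box_disj_x
  have e : SS t n₀ p L (j+1) L = SS t n₀ p L j L + aa t n₀ p L j L := SS_succ
  have h1 : SS t n₀ p L (j+1) L ≤ SS t n₀ p L p L := SS_mono_j ht0 h0 hj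
  linarith


include ht0 ht1 h0 hp hL hBIG in
lemma coverage {x y : ℝ} (hx1 : X ≤ x) (hx2 : x ≤ X + w) (hy1 : Y ≤ y) (hy2 : y ≤ Y + h) :
    (∃ j < p, ∃ l < L, (x, y) ∈ sqB t n₀ p L X Y j l) ∨
    (∃ j < p, ∃ l < L, (x, y) ∈ crB t n₀ p L X Y j l) ∨
    (∃ l < L, (x, y) ∈ rrB t n₀ p L X Y w l) ∨
    (∃ j < p, (x, y) ∈ tpB t n₀ p L X Y h j) ∨
    (x, y) ∈ coB t n₀ p L X Y w h := by
  classical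
  set ρ : ℕ → ℕ := fun j => Nat.findGreatest (fun l => Y + YY t n₀ p L j l ≤ y) L with hρdef
  have hρ_le : ∀ j, ρ j ≤ L := fun j => Nat.findGreatest_le L
  have hρ_spec : ∀ j, Y + YY t n₀ p L j (ρ j) ≤ y := by
    intro j
    have h00 : Y + YY t n₀ p L j 0 ≤ y := by rw [YY_zero]; linarith
    exact Nat.findGreatest_spec (P := fun l => Y + YY t n₀ p L j l ≤ y) (Nat.zero_le L) h00
  have hρ_gt : ∀ j m, ρ j < m → m ≤ L → y < Y + YY t n₀ p L j m := by
    intro j m h1 h2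
    have := Nat.findGreatest_is_greatest (P := fun l => Y + YY t n₀ p L j l ≤ y) h1 h2
    simp only [not_le] at this
    exact this
  have hρ_anti : ∀ j j', j' ≤ j → ρ j ≤ ρ j' := by
    intro j j' hjj
    apply Nat.le_findGreatest (P := fun l => Y + YY t n₀ p L j' l ≤ y) (hρ_le j)
    have h1 : YY t n₀ p L j' (ρ j) ≤ YY t n₀ p L j (ρ j) := YY_mono_j ht0 h0 hjj
    have := hρ_spec j
    show Y + YY t n₀ p L j' (ρ j) ≤ y
    linarith
  have hρ_drift : ∀ j, 1 ≤ j → j ≤ p - 1 → ρ (j-1) ≤ ρ j + 1 := by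
    intro j hj1 hj2
    by_contra hcon
    push_neg at hcon
    have h2L : ρ j + 2 ≤ L := by have := hρ_le (j-1); omega
    have hd : YY t n₀ p L ((j-1)+1) (ρ j + 1) ≤ YY t n₀ p L (j-1) (ρ j + 2) :=
      YY_drift ht0 ht1 h0 hp hL hBIG (by omega) (by omega) h2L
    have e : (j-1)+1 = j := by omega
    rw [e] at hd
    have h3 : YY t n₀ p L (j-1) (ρ j + 2) ≤ YY t n₀ p L (j-1) (ρ (j-1)) :=
      YY_mono_l ht0 h0 (by omega)
    have h4 := hρ_spec (j-1)
    have h5 := hρ_gt j (ρ j + 1) (by omega) (by omega)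
    linarith
  set G : ℕ → ℝ := fun j => if j = 0 then X else X + SS t n₀ p L j (ρ (j-1)) with hGdef
  set J : ℕ := Nat.findGreatest (fun j => G j ≤ x) p with hJdef
  have hJ_le : J ≤ p := Nat.findGreatest_le p
  have hJ_spec : G J ≤ x := by
    have h00 : G 0 ≤ x := by simp [hGdef]; exact hx1
    exact Nat.findGreatest_spec (P := fun j => G j ≤ x) (Nat.zero_le p) h00
  have hJ_gt : ∀ m, J < m → m ≤ p → x < G m := by
    intro m h1 h2
    have := Nat.findGreatest_is_greatest (P := fun j => G j ≤ x) h1 h2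
    simp only [not_le] at this
    exact this
  rcases Nat.eq_or_lt_of_le hJ_le with hJp | hJp
  · -- J = p : right remainder pieces
    have hp0 : p ≠ 0 := by omega
    have hGp : X + SS t n₀ p L p (ρ (p-1)) ≤ x := by
      have h1 := hJ_spec
      rw [hJp, hGdef] at h1
      simpa [if_neg hp0] using h1
    rcases Nat.eq_or_lt_of_le (hρ_le (p-1)) with hlL | hlL
    · -- corner
      right; right; right; right
      rw [hlL] at hGp
      have hyc := hρ_spec (p-1)
      rw [hlL] at hyc
      exact box_mem hGp (by linarith) hyc (by linarith)
    · -- right remainder at row l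
      right; right; left
      refine ⟨ρ (p-1), hlL, box_mem hGp (by linarith) (hρ_spec (p-1)) ?_⟩
      have h5 := hρ_gt (p-1) (ρ (p-1) + 1) (by omega) (by omega)
      have e : YY t n₀ p L (p-1) (ρ (p-1) + 1)
          = YY t n₀ p L (p-1) (ρ (p-1)) + aa t n₀ p L (p-1) (ρ (p-1)) := YY_succ
      linarith
  · -- J < p
    have hGJ1 : x < X + SS t n₀ p L (J+1) (ρ J) := by
      have h1 := hJ_gt (J+1) (by omega) (by omega)
      rw [hGdef] at h1
      simpa using h1
    rcases Nat.eq_or_lt_of_le (hρ_le J) with hlL | hlL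
    · -- top piece of column J
      right; right; right; left
      refine ⟨J, hJp, ?_⟩
      have hyL := hρ_spec J
      rw [hlL] at hyL
      have hxu : x < X + SS t n₀ p L (J+1) L := by rw [hlL] at hGJ1; exact hGJ1
      have e : SS t n₀ p L (J+1) L = SS t n₀ p L J L + aa t n₀ p L J L := SS_succ
      refine box_mem ?_ (by linarith) hyL (by linarith)
      rcases Nat.eq_zero_or_pos J with hJ0 | hJ0
      · rw [hJ0]
        rw [show SS t n₀ p L 0 L = 0 from SS_zero]
        linarith
      · have hJne : J ≠ 0 := by omega
        have h1 : ρ (J-1) = L := by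
          have h3 : ρ J ≤ ρ (J-1) := hρ_anti J (J-1) (by omega)
          have := hρ_le (J-1)
          omega
        have h2 := hJ_spec
        rw [hGdef] at h2
        simp only [if_neg hJne] at h2
        rw [h1] at h2
        exact h2
    · -- interior row l = ρ J < L
      set l : ℕ := ρ J with hldef
      have hyl : Y + YY t n₀ p L J l ≤ y := hρ_spec J
      have hyu : y < Y + YY t n₀ p L J (l+1) := hρ_gt J (l+1) (by omega) (by omega)
      have hsq : X + SS t n₀ p L J l ≤ x → (x, y) ∈ sqB t n₀ p L X Y J l := by
        intro hxl
        have e : SS t n₀ p L (J+1) l = SS t n₀ p L J l + aa t n₀ p L J l := SS_succ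
        have e2 : YY t n₀ p L J (l+1) = YY t n₀ p L J l + aa t n₀ p L J l := YY_succ
        exact box_mem hxl (by linarith) hyl (by linarith)
      rcases Nat.eq_zero_or_pos J with hJ0 | hJ0
      · left
        refine ⟨J, hJp, l, hlL, hsq ?_⟩
        rw [hJ0, show SS t n₀ p L 0 l = 0 from SS_zero]
        linarith
      · have hJne : J ≠ 0 := by omega
        have hcase : ρ (J-1) = l ∨ ρ (J-1) = l + 1 := by
          have h3 : ρ J ≤ ρ (J-1) := hρ_anti J (J-1) (by omega)
          have h4 := hρ_drift J (by omega) (by omega)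
          omega
        have hGJ : X + SS t n₀ p L J (ρ (J-1)) ≤ x := by
          have h2 := hJ_spec
          rw [hGdef] at h2
          simpa [if_neg hJne] using h2
        rcases hcase with hc | hc
        · rw [hc] at hGJ
          exact Or.inl ⟨J, hJp, l, hlL, hsq hGJ⟩
        · rw [hc] at hGJ
          by_cases hxs : X + SS t n₀ p L J l ≤ x
          · exact Or.inl ⟨J, hJp, l, hlL, hsq hxs⟩
          · push_neg at hxs
            right; left
            refine ⟨J, hJp, l, hlL, ?_⟩
            have hyc : Y + YY t n₀ p L (J-1) (l+1) ≤ y := by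
              have h6 := hρ_spec (J-1)
              rw [hc] at h6
              exact h6
            refine box_mem hGJ (by linarith) hyc ?_
            have e : YY t n₀ p L J (l+1) - YY t n₀ p L (J-1) (l+1)
                + (Y + YY t n₀ p L (J-1) (l+1)) = Y + YY t n₀ p L J (l+1) := by ring
            linarith


include ht0 h0 hp in
lemma sm_le_s : side t (n₀ + p*L) ≤ side t n₀ := side_anti (le_of_lt ht0) h0 (by omega)

include ht0 ht1 h0 hp hL hBIG in
lemma crack_w_nonneg {j l : ℕ} : 0 ≤ SS t n₀ p L j l - SS t n₀ p L j (l+1) := by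
  have := SS_anti_l (t := t) (n₀ := n₀) (p := p) (L := L) ht0 h0
    (j := j) (l := l) (l' := l+1) (by omega)
  linarith

include ht0 h0 in
lemma crack_h_nonneg {j l : ℕ} :
    0 ≤ YY t n₀ p L j (l+1) - YY t n₀ p L (j-1) (l+1) := by
  have := YY_mono_j (t := t) (n₀ := n₀) (p := p) (L := L) ht0 h0
    (j := j - 1) (j' := j) (l := l+1) (by omega)
  linarith

include ht0 ht1 h0 hp hL hBIG in
lemma crack_w_le {j l : ℕ} (hj : j ≤ p) :
    SS t n₀ p L j l - SS t n₀ p L j (l+1) ≤ side t n₀ := by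
  have h1 := SS_sub (t := t) (n₀ := n₀) (p := p) (L := L) ht0 ht1 h0 (j := j) (l := l) hj
  have h2 := pB_le_sm (t := t) h0 hp hL hBIG
  have h3 := sm_le_s (t := t) (n₀ := n₀) (p := p) (L := L) ht0 h0 hp
  linarith

include ht0 ht1 h0 hp hL hBIG in
lemma crack_h_le {j l : ℕ} (hj : j ≤ p - 1) (hl : l + 1 ≤ L) :
    YY t n₀ p L j (l+1) - YY t n₀ p L (j-1) (l+1) ≤ side t n₀ := by
  have h2 := LLB_le_sm (t := t) h0 hp hL hBIG
  have h3 := sm_le_s (t := t) (n₀ := n₀) (p := p) (L := L) ht0 h0 hp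
  rcases Nat.eq_zero_or_pos j with hj0 | hj0
  · rw [hj0]
    simp only [Nat.zero_sub, sub_self]
    exact side_nonneg
  · have e : (j-1)+1 = j := by omega
    have h1 : YY t n₀ p L ((j-1)+1) (l+1) - YY t n₀ p L (j-1) (l+1)
        ≤ (L:ℝ) * (L:ℝ) * (n₀:ℝ) ^ (-t-1) := YY_sub ht0 ht1 h0 (by omega) hl
    rw [e] at h1
    linarith


include ht0 ht1 h0 in
lemma s_sub_sm : side t n₀ - side t (n₀ + p*L) ≤ ((p:ℝ)*(L:ℝ)) * (n₀:ℝ)^(-t-1) := by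
  have h1 := side_diff (n₀ := n₀) ht0 ht1 h0 (le_refl n₀) (by omega : n₀ ≤ n₀ + p*L)
  have e : ((n₀ + p*L : ℕ):ℝ) - (n₀:ℝ) = (p:ℝ)*(L:ℝ) := by push_cast; ring
  rw [e] at h1
  exact h1

include ht0 ht1 h0 hp hL hBIG in
lemma rr_w_le {l : ℕ} (hl : l ≤ L) {w : ℝ} (hw2 : w ≤ ((p:ℝ)+1) * side t n₀) :
    w - SS t n₀ p L p l ≤ 2 * side t n₀ := by
  have hB := B_nonneg (t := t) h0
  have h1 : (p:ℝ) * side t (n₀+p*L) ≤ SS t n₀ p L p l := SS_ge ht0 h0 hp hl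
  have h2 := s_sub_sm (t := t) (n₀ := n₀) (p := p) (L := L) ht0 ht1 h0
  have hp0 : (1:ℝ) ≤ (p:ℝ) := by exact_mod_cast hp
  have hL0 : (1:ℝ) ≤ (L:ℝ) := by exact_mod_cast hL
  have key : (p:ℝ)*((p:ℝ)*(L:ℝ)) ≤ ((p:ℝ)+(L:ℝ))^4 := by
    have := prod4_le (a := (p:ℝ)) (b := (p:ℝ)) (c := (L:ℝ)) (d := 1) (S := (p:ℝ)+(L:ℝ))
      (by linarith) (by linarith) (by linarith) (by linarith)
      (by linarith) (by linarith) (by linarith) (by linarith)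
    nlinarith [this]
  have h3 : (p:ℝ)*(side t n₀ - side t (n₀+p*L)) ≤ side t (n₀+p*L) := by
    calc (p:ℝ)*(side t n₀ - side t (n₀+p*L)) ≤ (p:ℝ)*(((p:ℝ)*(L:ℝ)) * (n₀:ℝ)^(-t-1)) := by
          apply mul_le_mul_of_nonneg_left h2 (by linarith)
      _ ≤ ((p:ℝ)+(L:ℝ))^4 * (n₀:ℝ)^(-t-1) := by
          rw [← mul_assoc]
          exact mul_le_mul_of_nonneg_right key hB
      _ ≤ side t (n₀+p*L) := hBIG
  have h4 := sm_le_s (t := t) (n₀ := n₀) (p := p) (L := L) ht0 h0 hp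
  nlinarith

include ht0 ht1 h0 hp hL hBIG in
lemma tp_h_le {j : ℕ} {h : ℝ} (hh2 : h ≤ ((L:ℝ)+1) * side t n₀) :
    h - YY t n₀ p L j L ≤ 2 * side t n₀ := by
  have hB := B_nonneg (t := t) h0
  have h1 : (L:ℝ) * side t (n₀+p*L) ≤ YY t n₀ p L j L := YY_ge ht0 h0 hp (le_refl L)
  have h2 := s_sub_sm (t := t) (n₀ := n₀) (p := p) (L := L) ht0 ht1 h0
  have hp0 : (1:ℝ) ≤ (p:ℝ) := by exact_mod_cast hp
  have hL0 : (1:ℝ) ≤ (L:ℝ) := by exact_mod_cast hL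
  have key : (L:ℝ)*((p:ℝ)*(L:ℝ)) ≤ ((p:ℝ)+(L:ℝ))^4 := by
    have := prod4_le (a := (L:ℝ)) (b := (p:ℝ)) (c := (L:ℝ)) (d := 1) (S := (p:ℝ)+(L:ℝ))
      (by linarith) (by linarith) (by linarith) (by linarith)
      (by linarith) (by linarith) (by linarith) (by linarith)
    nlinarith [this]
  have h3 : (L:ℝ)*(side t n₀ - side t (n₀+p*L)) ≤ side t (n₀+p*L) := by
    calc (L:ℝ)*(side t n₀ - side t (n₀+p*L)) ≤ (L:ℝ)*(((p:ℝ)*(L:ℝ)) * (n₀:ℝ)^(-t-1)) := by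
          apply mul_le_mul_of_nonneg_left h2 (by linarith)
      _ ≤ ((p:ℝ)+(L:ℝ))^4 * (n₀:ℝ)^(-t-1) := by
          rw [← mul_assoc]
          exact mul_le_mul_of_nonneg_right key hB
      _ ≤ side t (n₀+p*L) := hBIG
  have h4 := sm_le_s (t := t) (n₀ := n₀) (p := p) (L := L) ht0 h0 hp
  nlinarith

include ht0 ht1 h0 hp hL hBIG in
lemma crack_wh_le {j l : ℕ} (hj : j ≤ p - 1) (hl : l + 1 ≤ L) :
    (SS t n₀ p L j l - SS t n₀ p L j (l+1))
      + (YY t n₀ p L j (l+1) - YY t n₀ p L (j-1) (l+1))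
    ≤ ((p:ℝ) + (L:ℝ)*(L:ℝ)) * (n₀:ℝ)^(-t-1) := by
  have h1 := SS_sub (t := t) (n₀ := n₀) (p := p) (L := L) ht0 ht1 h0 (j := j) (l := l) (by omega)
  rcases Nat.eq_zero_or_pos j with hj0 | hj0
  · have e : YY t n₀ p L j (l+1) - YY t n₀ p L (j-1) (l+1) = 0 := by
      rw [hj0]; simp
    rw [e]
    have hB := B_nonneg (t := t) h0
    have hL0 : (0:ℝ) ≤ (L:ℝ) := by positivity
    nlinarith
  · have e : (j-1)+1 = j := by omega
    have h2 : YY t n₀ p L ((j-1)+1) (l+1) - YY t n₀ p L (j-1) (l+1)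
        ≤ (L:ℝ) * (L:ℝ) * (n₀:ℝ) ^ (-t-1) := YY_sub ht0 ht1 h0 (by omega) hl
    rw [e] at h2
    have hB := B_nonneg (t := t) h0
    nlinarith

include ht0 ht1 h0 hp hL hBIG in
lemma cracks_total_le :
    (p:ℝ)*(L:ℝ)*(((p:ℝ) + (L:ℝ)*(L:ℝ))*(n₀:ℝ)^(-t-1)) ≤ 2 * side t n₀ := by
  have hB := B_nonneg (t := t) h0
  have hp0 : (1:ℝ) ≤ (p:ℝ) := by exact_mod_cast hp
  have hL0 : (1:ℝ) ≤ (L:ℝ) := by exact_mod_cast hL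
  have key : (p:ℝ)*(L:ℝ)*((p:ℝ) + (L:ℝ)*(L:ℝ)) ≤ 2*((p:ℝ)+(L:ℝ))^4 := by
    have k1 := prod4_le (a := (p:ℝ)) (b := (p:ℝ)) (c := (L:ℝ)) (d := 1) (S := (p:ℝ)+(L:ℝ))
      (by linarith) (by linarith) (by linarith) (by linarith)
      (by linarith) (by linarith) (by linarith) (by linarith)
    have k2 := prod4_le (a := (p:ℝ)) (b := (L:ℝ)) (c := (L:ℝ)) (d := (L:ℝ)) (S := (p:ℝ)+(L:ℝ))
      (by linarith) (by linarith) (by linarith) (by linarith)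
      (by linarith) (by linarith) (by linarith) (by linarith)
    nlinarith [k1, k2]
  have h3 : (p:ℝ)*(L:ℝ)*(((p:ℝ) + (L:ℝ)*(L:ℝ))*(n₀:ℝ)^(-t-1))
      ≤ 2*(((p:ℝ)+(L:ℝ))^4 * (n₀:ℝ)^(-t-1)) := by
    rw [← mul_assoc]
    have := mul_le_mul_of_nonneg_right key hB
    linarith [this]
  have h4 := sm_le_s (t := t) (n₀ := n₀) (p := p) (L := L) ht0 h0 hp
  linarith [hBIG]

end Disj


noncomputable def rct (t : ℝ) (n₀ p L : ℕ) (X Y w h : ℝ) (i : ℕ) : ℝ × ℝ × ℝ × ℝ :=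
  if i < p*L then
    (X + SS t n₀ p L (i/L) (i%L+1), Y + YY t n₀ p L (i/L - 1) (i%L+1),
     SS t n₀ p L (i/L) (i%L) - SS t n₀ p L (i/L) (i%L+1),
     YY t n₀ p L (i/L) (i%L+1) - YY t n₀ p L (i/L-1) (i%L+1))
  else if i < p*L + L then
    (X + SS t n₀ p L p (i-p*L), Y + YY t n₀ p L (p-1) (i-p*L),
     w - SS t n₀ p L p (i-p*L), aa t n₀ p L (p-1) (i-p*L))
  else if i < p*L + L + p then
    (X + SS t n₀ p L (i-(p*L+L)) L, Y + YY t n₀ p L (i-(p*L+L)) L,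
     aa t n₀ p L (i-(p*L+L)) L, h - YY t n₀ p L (i-(p*L+L)) L)
  else
    (X + SS t n₀ p L p L, Y + YY t n₀ p L (p-1) L, w - SS t n₀ p L p L, h - YY t n₀ p L (p-1) L)

lemma rct_cases {t : ℝ} {n₀ p L : ℕ} {X Y w h : ℝ} (hL : 0 < L) (i : ℕ)
    (hi : i < p*L + L + p + 1) :
    (∃ j l, j < p ∧ l < L ∧ i = j*L + l ∧ rct t n₀ p L X Y w h i =
      (X + SS t n₀ p L j (l+1), Y + YY t n₀ p L (j-1) (l+1),
       SS t n₀ p L j l - SS t n₀ p L j (l+1),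
       YY t n₀ p L j (l+1) - YY t n₀ p L (j-1) (l+1))) ∨
    (∃ l, l < L ∧ i = p*L + l ∧ rct t n₀ p L X Y w h i =
      (X + SS t n₀ p L p l, Y + YY t n₀ p L (p-1) l,
       w - SS t n₀ p L p l, aa t n₀ p L (p-1) l)) ∨
    (∃ j, j < p ∧ i = p*L + L + j ∧ rct t n₀ p L X Y w h i =
      (X + SS t n₀ p L j L, Y + YY t n₀ p L j L,
       aa t n₀ p L j L, h - YY t n₀ p L j L)) ∨
    (i = p*L + L + p ∧ rct t n₀ p L X Y w h i =
      (X + SS t n₀ p L p L, Y + YY t n₀ p L (p-1) L,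
       w - SS t n₀ p L p L, h - YY t n₀ p L (p-1) L)) := by
  by_cases h1 : i < p*L
  · left
    refine ⟨i/L, i%L, ?_, Nat.mod_lt _ hL, ?_, ?_⟩
    · exact (Nat.div_lt_iff_lt_mul hL).mpr h1
    · rw [Nat.mul_comm]; exact (Nat.div_add_mod i L).symm
    · rw [rct, if_pos h1]
  · by_cases h2 : i < p*L + L
    · right; left
      refine ⟨i - p*L, by omega, by omega, ?_⟩
      rw [rct, if_neg h1, if_pos h2]
    · by_cases h3 : i < p*L + L + p
      · right; right; left
        refine ⟨i - (p*L+L), by omega, by omega, ?_⟩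
        rw [rct, if_neg h1, if_neg h2, if_pos h3]
      · right; right; right
        refine ⟨by omega, ?_⟩
        rw [rct, if_neg h1, if_neg h2, if_neg h3]

end EffPack

open EffPack in
set_option maxHeartbeats 2000000 in
/-- Efficiently packing a small rectangle of bounded eccentricity: for `1/2 < t < 1`
there is a constant `C > 0` such that for all `M ≥ C` there is `N₀` so that for all
`n₀ ≥ N₀` and any rectangle `R` with `M n₀^{-t} ≤ w(R) ≤ h(R) ≤ 3M n₀^{-t}`, one can
perfectly pack `R` by the squares of sidelength `n^{-t}` for `n₀ ≤ n < n₀'`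
(with `n₀ + M²/C ≤ n₀' ≤ n₀ + C M²`) together with a finite family of leftover
rectangles of widths at most `C n₀^{-t}` and total perimeter at most `C M n₀^{-t}`. -/
theorem efficient_packing_bounded_eccentricity (t : ℝ) (ht1 : 1 / 2 < t) (ht2 : t < 1) :
    ∃ C : ℝ, 0 < C ∧
      ∀ M : ℕ, C ≤ (M : ℝ) →
      ∃ N₀ : ℕ, ∀ n₀ : ℕ, N₀ ≤ n₀ →
      ∀ X Y w h : ℝ,
        (M : ℝ) * (n₀ : ℝ) ^ (-t) ≤ w → w ≤ h → h ≤ 3 * (M : ℝ) * (n₀ : ℝ) ^ (-t) →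
        ∃ n₀' : ℕ,
          (n₀ : ℝ) + (M : ℝ) ^ 2 / C ≤ (n₀' : ℝ) ∧
          (n₀' : ℝ) ≤ (n₀ : ℝ) + C * (M : ℝ) ^ 2 ∧
          ∃ (pos : ℕ → ℝ × ℝ) (k : ℕ) (rx ry rw rh : Fin k → ℝ),
            (∀ i, 0 ≤ rw i) ∧ (∀ i, 0 ≤ rh i) ∧
            -- the squares lie in R
            (∀ n : ℕ, n₀ ≤ n → n < n₀' →
              Box (pos n).1 (pos n).2 ((n : ℝ) ^ (-t)) ((n : ℝ) ^ (-t)) ⊆ Box X Y w h) ∧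
            -- the leftover rectangles lie in R
            (∀ i, Box (rx i) (ry i) (rw i) (rh i) ⊆ Box X Y w h) ∧
            -- the squares have pairwise disjoint interiors
            (∀ m n : ℕ, n₀ ≤ m → m < n₀' → n₀ ≤ n → n < n₀' → m ≠ n →
              Disjoint
                (interior (Box (pos m).1 (pos m).2 ((m : ℝ) ^ (-t)) ((m : ℝ) ^ (-t))))
                (interior (Box (pos n).1 (pos n).2 ((n : ℝ) ^ (-t)) ((n : ℝ) ^ (-t))))) ∧
            -- the leftover rectangles have pairwise disjoint interiors
            (∀ i j : Fin k, i ≠ j →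
              Disjoint (interior (Box (rx i) (ry i) (rw i) (rh i)))
                (interior (Box (rx j) (ry j) (rw j) (rh j)))) ∧
            -- squares and leftover rectangles have disjoint interiors
            (∀ (n : ℕ) (i : Fin k), n₀ ≤ n → n < n₀' →
              Disjoint
                (interior (Box (pos n).1 (pos n).2 ((n : ℝ) ^ (-t)) ((n : ℝ) ^ (-t))))
                (interior (Box (rx i) (ry i) (rw i) (rh i)))) ∧
            -- together they cover R up to a null set
            volume (Box X Y w h \
              ((⋃ n ∈ Finset.Ico n₀ n₀',
                  Box (pos n).1 (pos n).2 ((n : ℝ) ^ (-t)) ((n : ℝ) ^ (-t))) ∪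
               ⋃ i, Box (rx i) (ry i) (rw i) (rh i))) = 0 ∧
            -- width bound on leftover rectangles
            (∀ i, min (rw i) (rh i) ≤ C * (n₀ : ℝ) ^ (-t)) ∧
            -- total perimeter bound on leftover rectangles
            (∑ i, 2 * (rw i + rh i) ≤ C * (M : ℝ) * (n₀ : ℝ) ^ (-t)) := by
  refine ⟨100, by norm_num, ?_⟩
  intro M hM
  refine ⟨M^6, ?_⟩
  intro n₀ hn₀ X Y w h hw hwh hh
  have ht0 : 0 < t := by linarith
  have ht1' : t ≤ 1 := le_of_lt ht2
  have hM100 : (100:ℝ) ≤ (M:ℝ) := hM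
  have hMn : 100 ≤ M := by exact_mod_cast hM
  have h0 : 0 < n₀ := by
    have h1 : 1 ≤ M^6 := Nat.one_le_iff_ne_zero.mpr (by positivity)
    omega
  have hn₀pos : (0:ℝ) < (n₀:ℝ) := by exact_mod_cast h0
  have spos : 0 < (n₀:ℝ)^(-t) := Real.rpow_pos_of_pos hn₀pos _
  set s : ℝ := (n₀:ℝ)^(-t) with hsdef
  have hsides : side t n₀ = s := rfl
  have hMpos : (0:ℝ) < M := by linarith
  have hwpos : 0 < w := lt_of_lt_of_le (by positivity) hw
  have hhpos : 0 < h := lt_of_lt_of_le hwpos hwh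
  set p : ℕ := ⌊w / s⌋₊ with hpdef
  set L : ℕ := ⌊h / s⌋₊ with hLdef
  have hMp : M ≤ p := Nat.le_floor (by rw [le_div_iff₀ spos]; linarith)
  have hML : M ≤ L := Nat.le_floor (by rw [le_div_iff₀ spos]; linarith)
  have hp : 0 < p := by omega
  have hL : 0 < L := by omega
  have hps : (p:ℝ) * s ≤ w := by
    have h1 : (p:ℝ) ≤ w/s := Nat.floor_le (by positivity)
    calc (p:ℝ)*s ≤ (w/s)*s := by nlinarith
      _ = w := by field_simp
  have hLs : (L:ℝ) * s ≤ h := by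
    have h1 : (L:ℝ) ≤ h/s := Nat.floor_le (by positivity)
    calc (L:ℝ)*s ≤ (h/s)*s := by nlinarith
      _ = h := by field_simp
  have hws : w ≤ ((p:ℝ)+1) * s := by
    have h1 : w/s < (p:ℝ)+1 := Nat.lt_floor_add_one (w/s)
    calc w = (w/s)*s := by field_simp
      _ ≤ ((p:ℝ)+1)*s := by nlinarith
  have hhs : h ≤ ((L:ℝ)+1) * s := by
    have h1 : h/s < (L:ℝ)+1 := Nat.lt_floor_add_one (h/s)
    calc h = (h/s)*s := by field_simp
      _ ≤ ((L:ℝ)+1)*s := by nlinarith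
  have hp3 : (p:ℝ) ≤ 3*M := by
    have h1 : (p:ℝ) ≤ w/s := Nat.floor_le (by positivity)
    have h2 : w/s ≤ 3*M := by rw [div_le_iff₀ spos]; linarith
    linarith
  have hL3 : (L:ℝ) ≤ 3*M := by
    have h1 : (L:ℝ) ≤ h/s := Nat.floor_le (by positivity)
    have h2 : h/s ≤ 3*M := by rw [div_le_iff₀ spos]; linarith
    linarith
  have hMpR : (M:ℝ) ≤ p := by exact_mod_cast hMp
  have hMLR : (M:ℝ) ≤ L := by exact_mod_cast hML
  clear_value p L
  -- cast of n₀ ≥ M^6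
  have hN6 : ((M:ℝ))^6 ≤ (n₀:ℝ) := by exact_mod_cast hn₀
  -- B ≤ s / M^6
  have hBeq : (n₀:ℝ)^(-t-1) = s * (n₀:ℝ)⁻¹ := by
    rw [show (-t-1 : ℝ) = (-t) + (-1) by ring, Real.rpow_add hn₀pos, Real.rpow_neg_one]
  have hBnn : (0:ℝ) ≤ (n₀:ℝ)^(-t-1) := Real.rpow_nonneg (le_of_lt hn₀pos) _
  have hBle : (n₀:ℝ)^(-t-1) ≤ s / (M:ℝ)^6 := by
    rw [hBeq, div_eq_mul_inv]
    apply mul_le_mul_of_nonneg_left _ (le_of_lt spos)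
    apply inv_anti₀ (by positivity) hN6
  have hsubsm : side t n₀ - side t (n₀ + p*L) ≤ ((p:ℝ)*(L:ℝ)) * (n₀:ℝ)^(-t-1) :=
    s_sub_sm ht0 ht1' h0
  have hpL9 : (p:ℝ)*(L:ℝ) ≤ 9*(M:ℝ)^2 := by
    have := mul_le_mul hp3 hL3 (by positivity) (by positivity)
    nlinarith [this]
  have hsm_ge : s/2 ≤ side t (n₀ + p*L) := by
    have h1 : ((p:ℝ)*(L:ℝ)) * (n₀:ℝ)^(-t-1) ≤ (9*(M:ℝ)^2) * (s/(M:ℝ)^6) := by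
      apply mul_le_mul hpL9 hBle hBnn (by positivity)
    have h2 : (9*(M:ℝ)^2) * (s/(M:ℝ)^6) ≤ s/2 := by
      have e : (9*(M:ℝ)^2) * (s/(M:ℝ)^6) = (9*(M:ℝ)^2*s)/(M:ℝ)^6 := by ring
      rw [e, div_le_div_iff₀ (by positivity) (by norm_num : (0:ℝ) < 2)]
      have hM4 : (100:ℝ)^4 ≤ (M:ℝ)^4 := pow_le_pow_left₀ (by norm_num) hM100 4
      have h18 : (18:ℝ) ≤ (M:ℝ)^4 := by nlinarith [hM4]
      have key : (18:ℝ)*(M:ℝ)^2 ≤ (M:ℝ)^6 := by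
        nlinarith [mul_le_mul_of_nonneg_right h18 (sq_nonneg (M:ℝ))]
      nlinarith [mul_le_mul_of_nonneg_left key (le_of_lt spos)]
    rw [hsides] at hsubsm
    linarith
  have hBIG : ((p:ℝ)+(L:ℝ))^4 * (n₀:ℝ)^(-t-1) ≤ side t (n₀ + p*L) := by
    have h1 : ((p:ℝ)+(L:ℝ))^4 ≤ (6*(M:ℝ))^4 := by
      apply pow_le_pow_left₀ (by positivity) (by linarith)
    have h2 : ((p:ℝ)+(L:ℝ))^4 * (n₀:ℝ)^(-t-1) ≤ (6*(M:ℝ))^4 * (s/(M:ℝ)^6) := by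
      apply mul_le_mul h1 hBle hBnn (by positivity)
    have h3 : (6*(M:ℝ))^4 * (s/(M:ℝ)^6) ≤ s/2 := by
      have e : (6*(M:ℝ))^4 * (s/(M:ℝ)^6) = (1296*(M:ℝ)^4*s)/(M:ℝ)^6 := by ring
      rw [e, div_le_div_iff₀ (by positivity) (by norm_num : (0:ℝ) < 2)]
      have hM2 : (100:ℝ)^2 ≤ (M:ℝ)^2 := pow_le_pow_left₀ (by norm_num) hM100 2
      have h26 : (2592:ℝ) ≤ (M:ℝ)^2 := by nlinarith [hM2]
      have key : (2592:ℝ)*(M:ℝ)^4 ≤ (M:ℝ)^6 := by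
        nlinarith [mul_le_mul_of_nonneg_right h26 (pow_nonneg (le_of_lt hMpos) 4)]
      nlinarith [mul_le_mul_of_nonneg_left key (le_of_lt spos)]
    linarith
  -- decoding of square indices
  have hdec : ∀ n, n₀ ≤ n → n < n₀ + p*L →
      (p - 1 - (n-n₀)/L) < p ∧ (n-n₀)%L < L ∧
        idx n₀ p L (p-1-(n-n₀)/L) ((n-n₀)%L) = n := by
    intro n h1 h2
    have hq : (n-n₀)/L < p := (Nat.div_lt_iff_lt_mul hL).mpr (by omega)
    have hr : (n-n₀)%L < L := Nat.mod_lt _ hL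
    have e2 : (n-n₀)/L*L + (n-n₀)%L = n - n₀ := by
      rw [Nat.mul_comm]; exact Nat.div_add_mod _ _
    refine ⟨?_, hr, ?_⟩
    · have h5 : p - 1 - (n-n₀)/L ≤ p - 1 := Nat.sub_le _ _
      omega
    · show n₀ + (p - 1 - (p-1-(n-n₀)/L)) * L + (n-n₀)%L = n
      have e1 : p - 1 - (p-1-(n-n₀)/L) = (n-n₀)/L := by
        have h5 : p - 1 - (n-n₀)/L ≤ p - 1 := Nat.sub_le _ _
        generalize (n-n₀)/L = q at hq h5 ⊢
        omega
      rw [e1]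
      omega
  -- encoding: for j < p, l < L the square index
  have henc : ∀ j l, j < p → l < L →
      n₀ ≤ idx n₀ p L j l ∧ idx n₀ p L j l < n₀ + p*L ∧
      (idx n₀ p L j l - n₀)/L = p-1-j ∧ (idx n₀ p L j l - n₀)%L = l := by
    intro j l hj hl
    have e0 : idx n₀ p L j l = n₀ + (p-1-j)*L + l := rfl
    have e1 : (p-1-j)*L + L = (p-1-j+1)*L := by ring
    have e2 : (p-1-j+1) ≤ p := by omega
    have e3 : (p-1-j+1)*L ≤ p*L := Nat.mul_le_mul_right _ e2
    have hlt : idx n₀ p L j l < n₀ + p*L := by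
      rw [e0]; omega
    refine ⟨by rw [e0]; omega, hlt, ?_, ?_⟩
    · rw [e0]
      have : n₀ + (p-1-j)*L + l - n₀ = l + (p-1-j)*L := by omega
      rw [this, Nat.add_mul_div_right _ _ hL, Nat.div_eq_of_lt hl]
      omega
    · rw [e0]
      have : n₀ + (p-1-j)*L + l - n₀ = l + (p-1-j)*L := by omega
      rw [this, Nat.add_mul_mod_self_right, Nat.mod_eq_of_lt hl]
  have haa : ∀ n, n₀ ≤ n → n < n₀ + p*L →
      aa t n₀ p L (p-1-(n-n₀)/L) ((n-n₀)%L) = (n:ℝ)^(-t) := by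
    intro n h1 h2
    obtain ⟨_, _, hidx⟩ := hdec n h1 h2
    show side t (idx n₀ p L (p-1-(n-n₀)/L) ((n-n₀)%L)) = (n:ℝ)^(-t)
    rw [hidx]
    rfl
  refine ⟨n₀ + p*L, ?_, ?_,
    (fun n => (X + SS t n₀ p L (p-1-(n-n₀)/L) ((n-n₀)%L),
               Y + YY t n₀ p L (p-1-(n-n₀)/L) ((n-n₀)%L))),
    p*L + L + p + 1,
    (fun i => (rct t n₀ p L X Y w h i.1).1),
    (fun i => (rct t n₀ p L X Y w h i.1).2.1),
    (fun i => (rct t n₀ p L X Y w h i.1).2.2.1),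
    (fun i => (rct t n₀ p L X Y w h i.1).2.2.2),
    ?_, ?_, ?_, ?_, ?_, ?_, ?_, ?_, ?_, ?_⟩
  · -- n₀' lower bound
    push_cast
    have : (M:ℝ)*(M:ℝ) ≤ (p:ℝ)*(L:ℝ) :=
      mul_le_mul hMpR hMLR (by positivity) (by positivity)
    nlinarith
  · -- n₀' upper bound
    push_cast
    nlinarith [mul_le_mul hp3 hL3 (by positivity : (0:ℝ) ≤ (L:ℝ)) (by positivity : (0:ℝ) ≤ 3*(M:ℝ))]
  · -- 0 ≤ rw i
    intro i
    rcases rct_cases (t := t) (n₀ := n₀) (X := X) (Y := Y) (w := w) (h := h) hL i.1 i.isLt with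
      ⟨j,l,hj,hl,hieq,hr⟩ | ⟨l,hl,hieq,hr⟩ | ⟨j,hj,hieq,hr⟩ | ⟨hieq,hr⟩ <;>
      simp only [hr]
    · exact crack_w_nonneg ht0 ht1' h0 hp hL hBIG
    · have h1 := SS_le (t := t) (n₀ := n₀) (p := p) (L := L) ht0 h0 (j := p) (l := l)
      rw [hsides] at h1
      linarith
    · exact le_of_lt (aa_pos ht0 h0)
    · have h1 := SS_le (t := t) (n₀ := n₀) (p := p) (L := L) ht0 h0 (j := p) (l := L)
      rw [hsides] at h1
      linarith
  · -- 0 ≤ rh i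
    intro i
    rcases rct_cases (t := t) (n₀ := n₀) (X := X) (Y := Y) (w := w) (h := h) hL i.1 i.isLt with
      ⟨j,l,hj,hl,hieq,hr⟩ | ⟨l,hl,hieq,hr⟩ | ⟨j,hj,hieq,hr⟩ | ⟨hieq,hr⟩ <;>
      simp only [hr]
    · exact crack_h_nonneg ht0 h0
    · exact le_of_lt (aa_pos ht0 h0)
    · have h1 := YY_le (t := t) (n₀ := n₀) (p := p) (L := L) ht0 h0 (j := j) (l := L)
      rw [hsides] at h1
      linarith
    · have h1 := YY_le (t := t) (n₀ := n₀) (p := p) (L := L) ht0 h0 (j := p-1) (l := L)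
      rw [hsides] at h1
      linarith
  · -- squares ⊆ R
    intro n h1 h2
    obtain ⟨hjp, hlp, hidx⟩ := hdec n h1 h2
    rw [← haa n h1 h2]
    apply box_subset
    · have := SS_nonneg (t := t) (n₀ := n₀) (p := p) (L := L) ht0 h0
        (j := p-1-(n-n₀)/L) (l := (n-n₀)%L)
      linarith
    · have e : SS t n₀ p L (p-1-(n-n₀)/L+1) ((n-n₀)%L)
          = SS t n₀ p L (p-1-(n-n₀)/L) ((n-n₀)%L)
            + aa t n₀ p L (p-1-(n-n₀)/L) ((n-n₀)%L) := SS_succ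
      have h3 : SS t n₀ p L (p-1-(n-n₀)/L+1) ((n-n₀)%L) ≤ SS t n₀ p L p ((n-n₀)%L) :=
        SS_mono_j ht0 h0 (by omega)
      have h4 := SS_le (t := t) (n₀ := n₀) (p := p) (L := L) ht0 h0
        (j := p) (l := (n-n₀)%L)
      rw [hsides] at h4
      linarith
    · have := YY_nonneg (t := t) (n₀ := n₀) (p := p) (L := L) ht0 h0
        (j := p-1-(n-n₀)/L) (l := (n-n₀)%L)
      linarith
    · have e : YY t n₀ p L (p-1-(n-n₀)/L) ((n-n₀)%L+1)
          = YY t n₀ p L (p-1-(n-n₀)/L) ((n-n₀)%L)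
            + aa t n₀ p L (p-1-(n-n₀)/L) ((n-n₀)%L) := YY_succ
      have h4 := YY_le (t := t) (n₀ := n₀) (p := p) (L := L) ht0 h0
        (j := p-1-(n-n₀)/L) (l := (n-n₀)%L+1)
      rw [hsides] at h4
      have h5 : (((n-n₀)%L+1 : ℕ):ℝ) * s ≤ (L:ℝ) * s := by
        have : (((n-n₀)%L+1 : ℕ):ℝ) ≤ (L:ℝ) := by exact_mod_cast hlp
        nlinarith
      linarith
  · -- rects ⊆ R
    intro i
    rcases rct_cases (t := t) (n₀ := n₀) (X := X) (Y := Y) (w := w) (h := h) hL i.1 i.isLt with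
      ⟨j,l,hj,hl,hieq,hr⟩ | ⟨l,hl,hieq,hr⟩ | ⟨j,hj,hieq,hr⟩ | ⟨hieq,hr⟩ <;>
      simp only [hr] <;> apply box_subset
    · have := SS_nonneg (t := t) (n₀ := n₀) (p := p) (L := L) ht0 h0 (j := j) (l := l+1)
      linarith
    · have h3 : SS t n₀ p L j l ≤ SS t n₀ p L p l := SS_mono_j ht0 h0 (by omega)
      have h4 := SS_le (t := t) (n₀ := n₀) (p := p) (L := L) ht0 h0 (j := p) (l := l)
      rw [hsides] at h4
      linarith
    · have := YY_nonneg (t := t) (n₀ := n₀) (p := p) (L := L) ht0 h0 (j := j-1) (l := l+1)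
      linarith
    · have h4 := YY_le (t := t) (n₀ := n₀) (p := p) (L := L) ht0 h0 (j := j) (l := l+1)
      rw [hsides] at h4
      have h5 : ((l+1 : ℕ):ℝ) * s ≤ (L:ℝ) * s := by
        have : ((l+1 : ℕ):ℝ) ≤ (L:ℝ) := by exact_mod_cast hl
        nlinarith
      push_cast at h4 h5
      linarith
    · have := SS_nonneg (t := t) (n₀ := n₀) (p := p) (L := L) ht0 h0 (j := p) (l := l)
      linarith
    · linarith
    · have := YY_nonneg (t := t) (n₀ := n₀) (p := p) (L := L) ht0 h0 (j := p-1) (l := l)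
      linarith
    · have e : YY t n₀ p L (p-1) (l+1)
          = YY t n₀ p L (p-1) l + aa t n₀ p L (p-1) l := YY_succ
      have h4 := YY_le (t := t) (n₀ := n₀) (p := p) (L := L) ht0 h0 (j := p-1) (l := l+1)
      rw [hsides] at h4
      have h5 : ((l+1 : ℕ):ℝ) * s ≤ (L:ℝ) * s := by
        have : ((l+1 : ℕ):ℝ) ≤ (L:ℝ) := by exact_mod_cast hl
        nlinarith
      push_cast at h4 h5
      linarith
    · have := SS_nonneg (t := t) (n₀ := n₀) (p := p) (L := L) ht0 h0 (j := j) (l := L)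
      linarith
    · have e : SS t n₀ p L (j+1) L = SS t n₀ p L j L + aa t n₀ p L j L := SS_succ
      have h3 : SS t n₀ p L (j+1) L ≤ SS t n₀ p L p L := SS_mono_j ht0 h0 (by omega)
      have h4 := SS_le (t := t) (n₀ := n₀) (p := p) (L := L) ht0 h0 (j := p) (l := L)
      rw [hsides] at h4
      linarith
    · have := YY_nonneg (t := t) (n₀ := n₀) (p := p) (L := L) ht0 h0 (j := j) (l := L)
      linarith
    · linarith
    · have := SS_nonneg (t := t) (n₀ := n₀) (p := p) (L := L) ht0 h0 (j := p) (l := L)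
      linarith
    · linarith
    · have := YY_nonneg (t := t) (n₀ := n₀) (p := p) (L := L) ht0 h0 (j := p-1) (l := L)
      linarith
    · linarith
  · -- squares pairwise disjoint
    intro m n h1 h2 h3 h4 hmn
    obtain ⟨hjm, hlm, hidxm⟩ := hdec m h1 h2
    obtain ⟨hjn, hln, hidxn⟩ := hdec n h3 h4
    rw [← haa m h1 h2, ← haa n h3 h4]
    have hne : (p-1-(m-n₀)/L, (m-n₀)%L) ≠ (p-1-(n-n₀)/L, (n-n₀)%L) := by
      intro hc
      apply hmn
      have e1 : p-1-(m-n₀)/L = p-1-(n-n₀)/L := congrArg Prod.fst hc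
      have e2 : (m-n₀)%L = (n-n₀)%L := congrArg Prod.snd hc
      rw [← hidxm, ← hidxn, e1, e2]
    exact disj_sq_sq ht0 h0 hne
  · -- rects pairwise disjoint
    intro i i' hne
    rcases rct_cases (t := t) (n₀ := n₀) (X := X) (Y := Y) (w := w) (h := h) hL i.1 i.isLt with
      ⟨j,l,hj,hl,hieq,hr⟩ | ⟨l,hl,hieq,hr⟩ | ⟨j,hj,hieq,hr⟩ | ⟨hieq,hr⟩ <;>
    rcases rct_cases (t := t) (n₀ := n₀) (X := X) (Y := Y) (w := w) (h := h) hL i'.1 i'.isLt with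
      ⟨j',l',hj',hl',hieq',hr'⟩ | ⟨l',hl',hieq',hr'⟩ | ⟨j',hj',hieq',hr'⟩ | ⟨hieq',hr'⟩ <;>
      simp only [hr, hr']
    · -- cr cr
      have hne2 : (j,l) ≠ (j',l') := by
        intro hc
        apply hne
        have e1 : j = j' := congrArg Prod.fst hc
        have e2 : l = l' := congrArg Prod.snd hc
        apply Fin.ext
        rw [hieq, hieq', e1, e2]
      exact disj_cr_cr ht0 ht1' h0 hp hL hBIG (by omega) (by omega) (by omega) (by omega) hne2
    · exact disj_cr_rr ht0 h0 (by omega)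
    · exact disj_cr_tp ht0 h0 (by omega)
    · exact disj_cr_co ht0 h0 (by omega) (by omega)
    · exact (disj_cr_rr ht0 h0 (by omega)).symm
    · -- rr rr
      have hne2 : l ≠ l' := by
        intro hc
        exact hne (Fin.ext (by rw [hieq, hieq', hc]))
      exact disj_rr_rr ht0 h0 hne2
    · exact disj_rr_tp ht0 h0 (by omega) (by omega)
    · exact disj_rr_co ht0 h0 (by omega)
    · exact (disj_cr_tp ht0 h0 (by omega)).symm
    · exact (disj_rr_tp ht0 h0 (by omega) (by omega)).symm
    · -- tp tp
      have hne2 : j ≠ j' := by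
        intro hc
        exact hne (Fin.ext (by rw [hieq, hieq', hc]))
      exact disj_tp_tp ht0 h0 hne2
    · exact disj_tp_co ht0 h0 (by omega)
    · exact (disj_cr_co ht0 h0 (by omega) (by omega)).symm
    · exact (disj_rr_co ht0 h0 (by omega)).symm
    · exact (disj_tp_co ht0 h0 (by omega)).symm
    · exact absurd (Fin.ext (by rw [hieq, hieq'])) hne
  · -- squares vs rects disjoint
    intro n i h1 h2
    rw [← haa n h1 h2]
    obtain ⟨hjp, hlp, hidx⟩ := hdec n h1 h2
    rcases rct_cases (t := t) (n₀ := n₀) (X := X) (Y := Y) (w := w) (h := h) hL i.1 i.isLt with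
      ⟨j',l',hj',hl',hieq,hr⟩ | ⟨l',hl',hieq,hr⟩ | ⟨j',hj',hieq,hr⟩ | ⟨hieq,hr⟩ <;>
      simp only [hr]
    · exact disj_sq_cr ht0 h0 (by omega)
    · exact disj_sq_rr ht0 h0 (by omega)
    · exact disj_sq_tp ht0 h0 (by omega)
    · exact disj_sq_co ht0 h0 (by omega) (by omega)
  · -- coverage up to null sets
    have hcov : Box X Y w h ⊆
        ((⋃ n ∈ Finset.Ico n₀ (n₀ + p*L),
            Box (X + SS t n₀ p L (p-1-(n-n₀)/L) ((n-n₀)%L),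
                 Y + YY t n₀ p L (p-1-(n-n₀)/L) ((n-n₀)%L)).1
              (X + SS t n₀ p L (p-1-(n-n₀)/L) ((n-n₀)%L),
                 Y + YY t n₀ p L (p-1-(n-n₀)/L) ((n-n₀)%L)).2
              ((n : ℝ) ^ (-t)) ((n : ℝ) ^ (-t))) ∪
         ⋃ i : Fin (p*L + L + p + 1),
           Box (rct t n₀ p L X Y w h i.1).1 (rct t n₀ p L X Y w h i.1).2.1
             (rct t n₀ p L X Y w h i.1).2.2.1 (rct t n₀ p L X Y w h i.1).2.2.2) := by
      rintro ⟨x, y⟩ hz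
      obtain ⟨⟨hx1, hx2⟩, ⟨hy1, hy2⟩⟩ := hz
      rcases coverage ht0 ht1' h0 hp hL hBIG hx1 hx2 hy1 hy2 with
        ⟨j,hj,l,hl,hmem⟩ | ⟨j,hj,l,hl,hmem⟩ | ⟨l,hl,hmem⟩ | ⟨j,hj,hmem⟩ | hmem
      · -- square piece
        left
        obtain ⟨hge, hlt, hdiv, hmod⟩ := henc j l hj hl
        refine Set.mem_iUnion₂.mpr ⟨idx n₀ p L j l, Finset.mem_Ico.mpr ⟨hge, hlt⟩, ?_⟩
        have ej : p-1-(idx n₀ p L j l - n₀)/L = j := by rw [hdiv]; omega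
        have el : (idx n₀ p L j l - n₀)%L = l := hmod
        rw [ej, el]
        exact hmem
      · -- crack piece
        right
        have hi1 : j*L + l < p*L := by
          have e1 : (j+1)*L ≤ p*L := Nat.mul_le_mul_right _ (by omega)
          have e2 : (j+1)*L = j*L + L := by ring
          omega
        have hdiv : (j*L + l)/L = j := by
          rw [Nat.mul_comm, Nat.mul_add_div hL, Nat.div_eq_of_lt hl]
          omega
        have hmod : (j*L + l)%L = l := by
          rw [Nat.mul_comm, Nat.mul_add_mod, Nat.mod_eq_of_lt hl]
        refine Set.mem_iUnion.mpr ⟨⟨j*L + l, by omega⟩, ?_⟩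
        show (x, y) ∈ Box (rct t n₀ p L X Y w h (j*L+l)).1 (rct t n₀ p L X Y w h (j*L+l)).2.1
          (rct t n₀ p L X Y w h (j*L+l)).2.2.1 (rct t n₀ p L X Y w h (j*L+l)).2.2.2
        simp only [rct, if_pos hi1, hdiv, hmod]
        exact hmem
      · -- rrem piece
        right
        have hc1 : ¬(p*L + l < p*L) := by omega
        have hc2 : p*L + l < p*L + L := by omega
        refine Set.mem_iUnion.mpr ⟨⟨p*L + l, by omega⟩, ?_⟩
        show (x, y) ∈ Box (rct t n₀ p L X Y w h (p*L+l)).1 (rct t n₀ p L X Y w h (p*L+l)).2.1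
          (rct t n₀ p L X Y w h (p*L+l)).2.2.1 (rct t n₀ p L X Y w h (p*L+l)).2.2.2
        simp only [rct, if_neg hc1, if_pos hc2, Nat.add_sub_cancel_left]
        exact hmem
      · -- top piece
        right
        have hc1 : ¬(p*L + L + j < p*L) := by omega
        have hc2 : ¬(p*L + L + j < p*L + L) := by omega
        have hc3 : p*L + L + j < p*L + L + p := by omega
        have he : p*L + L + j - (p*L + L) = j := by omega
        refine Set.mem_iUnion.mpr ⟨⟨p*L + L + j, by omega⟩, ?_⟩
        show (x, y) ∈ Box (rct t n₀ p L X Y w h (p*L+L+j)).1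
          (rct t n₀ p L X Y w h (p*L+L+j)).2.1
          (rct t n₀ p L X Y w h (p*L+L+j)).2.2.1 (rct t n₀ p L X Y w h (p*L+L+j)).2.2.2
        simp only [rct, if_neg hc1, if_neg hc2, if_pos hc3, he]
        exact hmem
      · -- corner piece
        right
        have hc1 : ¬(p*L + L + p < p*L) := by omega
        have hc2 : ¬(p*L + L + p < p*L + L) := by omega
        have hc3 : ¬(p*L + L + p < p*L + L + p) := by omega
        refine Set.mem_iUnion.mpr ⟨⟨p*L + L + p, by omega⟩, ?_⟩
        show (x, y) ∈ Box (rct t n₀ p L X Y w h (p*L+L+p)).1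
          (rct t n₀ p L X Y w h (p*L+L+p)).2.1
          (rct t n₀ p L X Y w h (p*L+L+p)).2.2.1 (rct t n₀ p L X Y w h (p*L+L+p)).2.2.2
        simp only [rct, if_neg hc1, if_neg hc2, if_neg hc3]
        exact hmem
    rw [Set.diff_eq_empty.mpr hcov]
    exact measure_empty
  · -- min width bound
    intro i
    rcases rct_cases (t := t) (n₀ := n₀) (X := X) (Y := Y) (w := w) (h := h) hL i.1 i.isLt with
      ⟨j,l,hj,hl,hieq,hr⟩ | ⟨l,hl,hieq,hr⟩ | ⟨j,hj,hieq,hr⟩ | ⟨hieq,hr⟩ <;>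
      simp only [hr] <;> refine le_trans (min_le_left _ _) ?_ <;> try skip
    · have h1 := crack_w_le ht0 ht1' h0 hp hL hBIG (j := j) (l := l) (by omega)
      rw [hsides] at h1
      linarith
    · have h1 := rr_w_le ht0 ht1' h0 hp hL hBIG (l := l) (by omega) (w := w)
        (by rw [hsides]; exact hws)
      rw [hsides] at h1
      linarith
    · have h1 := aa_le_s (t := t) (n₀ := n₀) (p := p) (L := L) ht0 h0 (j := j) (l := L)
      rw [hsides] at h1
      linarith
    · have h1 := rr_w_le ht0 ht1' h0 hp hL hBIG (l := L) (le_refl L) (w := w)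
        (by rw [hsides]; exact hws)
      rw [hsides] at h1
      linarith
  · -- perimeter sum
    have hrw : ∀ i : Fin (p*L + L + p + 1),
        (2:ℝ) * ((rct t n₀ p L X Y w h i.1).2.2.1 + (rct t n₀ p L X Y w h i.1).2.2.2)
        = (fun i : ℕ => 2 * ((rct t n₀ p L X Y w h i).2.2.1
            + (rct t n₀ p L X Y w h i).2.2.2)) i.1 := fun i => rfl
    rw [show (∑ i : Fin (p*L + L + p + 1),
        2 * ((rct t n₀ p L X Y w h i.1).2.2.1 + (rct t n₀ p L X Y w h i.1).2.2.2))
      = ∑ i ∈ Finset.range (p*L + L + p + 1),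
        2 * ((rct t n₀ p L X Y w h i).2.2.1 + (rct t n₀ p L X Y w h i).2.2.2) from
      Fin.sum_univ_eq_sum_range
        (fun i : ℕ => 2 * ((rct t n₀ p L X Y w h i).2.2.1
          + (rct t n₀ p L X Y w h i).2.2.2)) (p*L + L + p + 1)]
    rw [Finset.range_eq_Ico]
    rw [← Finset.sum_Ico_consecutive _ (by omega : 0 ≤ p*L) (by omega : p*L ≤ p*L+L+p+1)]
    rw [← Finset.sum_Ico_consecutive (m := p*L) (n := p*L+L) (k := p*L+L+p+1) _
      (by omega) (by omega)]
    rw [← Finset.sum_Ico_consecutive (m := p*L+L) (n := p*L+L+p) (k := p*L+L+p+1) _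
      (by omega) (by omega)]
    have hS1 : (∑ i ∈ Finset.Ico 0 (p*L),
        2 * ((rct t n₀ p L X Y w h i).2.2.1 + (rct t n₀ p L X Y w h i).2.2.2))
        ≤ (p*L : ℝ) * (2 * (((p:ℝ) + (L:ℝ)*(L:ℝ)) * (n₀:ℝ)^(-t-1))) := by
      have hbd : ∀ i ∈ Finset.Ico 0 (p*L),
          2 * ((rct t n₀ p L X Y w h i).2.2.1 + (rct t n₀ p L X Y w h i).2.2.2)
          ≤ 2 * (((p:ℝ) + (L:ℝ)*(L:ℝ)) * (n₀:ℝ)^(-t-1)) := by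
        intro i hi
        have hi' : i < p*L := (Finset.mem_Ico.mp hi).2
        have hjlt : i / L < p := (Nat.div_lt_iff_lt_mul hL).mpr hi'
        have hllt : i % L < L := Nat.mod_lt _ hL
        simp only [rct, if_pos hi']
        have h1 := crack_wh_le ht0 ht1' h0 hp hL hBIG (j := i/L) (l := i%L)
          (by omega) (by omega)
        linarith
      calc (∑ i ∈ Finset.Ico 0 (p*L),
            2 * ((rct t n₀ p L X Y w h i).2.2.1 + (rct t n₀ p L X Y w h i).2.2.2))
          ≤ ∑ _i ∈ Finset.Ico 0 (p*L),
            2 * (((p:ℝ) + (L:ℝ)*(L:ℝ)) * (n₀:ℝ)^(-t-1)) := Finset.sum_le_sum hbd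
        _ = (p*L : ℝ) * (2 * (((p:ℝ) + (L:ℝ)*(L:ℝ)) * (n₀:ℝ)^(-t-1))) := by
            rw [Finset.sum_const, Nat.card_Ico]
            simp [nsmul_eq_mul]
    have hS1' : (∑ i ∈ Finset.Ico 0 (p*L),
        2 * ((rct t n₀ p L X Y w h i).2.2.1 + (rct t n₀ p L X Y w h i).2.2.2)) ≤ 4 * s := by
      have h1 := cracks_total_le ht0 ht1' h0 hp hL hBIG
      rw [hsides] at h1
      have e : (p*L : ℝ) * (2 * (((p:ℝ) + (L:ℝ)*(L:ℝ)) * (n₀:ℝ)^(-t-1)))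
          = 2 * ((p:ℝ)*(L:ℝ)*(((p:ℝ) + (L:ℝ)*(L:ℝ)) * (n₀:ℝ)^(-t-1))) := by
        push_cast; ring
      rw [e] at hS1
      linarith
    have hS2 : (∑ i ∈ Finset.Ico (p*L) (p*L+L),
        2 * ((rct t n₀ p L X Y w h i).2.2.1 + (rct t n₀ p L X Y w h i).2.2.2))
        ≤ (L:ℝ) * (6 * s) := by
      have hbd : ∀ i ∈ Finset.Ico (p*L) (p*L+L),
          2 * ((rct t n₀ p L X Y w h i).2.2.1 + (rct t n₀ p L X Y w h i).2.2.2)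
          ≤ 6 * s := by
        intro i hi
        obtain ⟨hi1, hi2⟩ := Finset.mem_Ico.mp hi
        have hc1 : ¬(i < p*L) := by omega
        simp only [rct, if_neg hc1, if_pos hi2]
        have h1 := rr_w_le ht0 ht1' h0 hp hL hBIG (l := i - p*L) (by omega) (w := w)
          (by rw [hsides]; exact hws)
        have h2 := aa_le_s (t := t) (n₀ := n₀) (p := p) (L := L) ht0 h0
          (j := p-1) (l := i - p*L)
        rw [hsides] at h1 h2
        linarith
      calc (∑ i ∈ Finset.Ico (p*L) (p*L+L),
            2 * ((rct t n₀ p L X Y w h i).2.2.1 + (rct t n₀ p L X Y w h i).2.2.2))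
          ≤ ∑ _i ∈ Finset.Ico (p*L) (p*L+L), 6 * s := Finset.sum_le_sum hbd
        _ = (L:ℝ) * (6 * s) := by
            rw [Finset.sum_const, Nat.card_Ico]
            simp [nsmul_eq_mul]
    have hS3 : (∑ i ∈ Finset.Ico (p*L+L) (p*L+L+p),
        2 * ((rct t n₀ p L X Y w h i).2.2.1 + (rct t n₀ p L X Y w h i).2.2.2))
        ≤ (p:ℝ) * (6 * s) := by
      have hbd : ∀ i ∈ Finset.Ico (p*L+L) (p*L+L+p),
          2 * ((rct t n₀ p L X Y w h i).2.2.1 + (rct t n₀ p L X Y w h i).2.2.2)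
          ≤ 6 * s := by
        intro i hi
        obtain ⟨hi1, hi2⟩ := Finset.mem_Ico.mp hi
        have hc1 : ¬(i < p*L) := by omega
        have hc2 : ¬(i < p*L + L) := by omega
        simp only [rct, if_neg hc1, if_neg hc2, if_pos hi2]
        have h1 := tp_h_le ht0 ht1' h0 hp hL hBIG (j := i - (p*L+L)) (h := h)
          (by rw [hsides]; exact hhs)
        have h2 := aa_le_s (t := t) (n₀ := n₀) (p := p) (L := L) ht0 h0
          (j := i - (p*L+L)) (l := L)
        rw [hsides] at h1 h2
        linarith
      calc (∑ i ∈ Finset.Ico (p*L+L) (p*L+L+p),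
            2 * ((rct t n₀ p L X Y w h i).2.2.1 + (rct t n₀ p L X Y w h i).2.2.2))
          ≤ ∑ _i ∈ Finset.Ico (p*L+L) (p*L+L+p), 6 * s := Finset.sum_le_sum hbd
        _ = (p:ℝ) * (6 * s) := by
            rw [Finset.sum_const, Nat.card_Ico]
            simp [nsmul_eq_mul]
    have hS4 : (∑ i ∈ Finset.Ico (p*L+L+p) (p*L+L+p+1),
        2 * ((rct t n₀ p L X Y w h i).2.2.1 + (rct t n₀ p L X Y w h i).2.2.2))
        ≤ 8 * s := by
      have hbd : ∀ i ∈ Finset.Ico (p*L+L+p) (p*L+L+p+1),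
          2 * ((rct t n₀ p L X Y w h i).2.2.1 + (rct t n₀ p L X Y w h i).2.2.2)
          ≤ 8 * s := by
        intro i hi
        obtain ⟨hi1, hi2⟩ := Finset.mem_Ico.mp hi
        have hc1 : ¬(i < p*L) := by omega
        have hc2 : ¬(i < p*L + L) := by omega
        have hc3 : ¬(i < p*L + L + p) := by omega
        simp only [rct, if_neg hc1, if_neg hc2, if_neg hc3]
        have h1 := rr_w_le ht0 ht1' h0 hp hL hBIG (l := L) (le_refl L) (w := w)
          (by rw [hsides]; exact hws)
        have h2 := tp_h_le ht0 ht1' h0 hp hL hBIG (j := p-1) (h := h)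
          (by rw [hsides]; exact hhs)
        rw [hsides] at h1 h2
        linarith
      calc (∑ i ∈ Finset.Ico (p*L+L+p) (p*L+L+p+1),
            2 * ((rct t n₀ p L X Y w h i).2.2.1 + (rct t n₀ p L X Y w h i).2.2.2))
          ≤ ∑ _i ∈ Finset.Ico (p*L+L+p) (p*L+L+p+1), 8 * s := Finset.sum_le_sum hbd
        _ = 8 * s := by
            rw [Finset.sum_const, Nat.card_Ico]
            simp [nsmul_eq_mul]
    have hfin : 4*s + (L:ℝ)*(6*s) + (p:ℝ)*(6*s) + 8*s ≤ 100 * (M:ℝ) * s := by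
      nlinarith [spos, hM100, hp3, hL3, hMpos]
    linarith
end

section
/- Let 0 < t < 1, let n₀, M₁, M₂ be natural numbers with n₀ ≥ 1, M₁ ≥ 1, M₂ ≥ 1, let w be a real number, and for 0 ≤ i < M₁ and 0 ≤ j < M₂ define n_{i,j} := n₀ + j·M₁ + i, x_{i,j} := w − ∑_{i'=i}^{M₁−1} n_{i',j}^{-t}, and y_{i,j} := ∑_{j'=0}^{j−1} n_{i,j'}^{-t}. Then for all 0 ≤ i < M₁ and 0 ≤ j < M₂ one has |x_{i,j} − (w − (M₁ − i)·n₀^{-t})| ≤ t·M₁²·M₂·n₀^{-t-1} and |y_{i,j} − j·n₀^{-t}| ≤ t·M₁·M₂²·n₀^{-t-1}. -/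
open Finset

/-- The lexicographic index `n_{i,j} = n₀ + j M₁ + i`. -/
def nij (n₀ M₁ i j : ℕ) : ℕ := n₀ + j * M₁ + i

/-- The abscissa `x_{i,j} = w - ∑_{i'=i}^{M₁-1} n_{i',j}^{-t}`. -/
noncomputable def xij (t w : ℝ) (n₀ M₁ i j : ℕ) : ℝ :=
  w - ∑ i' ∈ Finset.Ico i M₁, ((nij n₀ M₁ i' j : ℕ) : ℝ) ^ (-t)

/-- The ordinate `y_{i,j} = ∑_{j'=0}^{j-1} n_{i,j'}^{-t}`. -/
noncomputable def yij (t : ℝ) (n₀ M₁ i j : ℕ) : ℝ :=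
  ∑ j' ∈ Finset.range j, ((nij n₀ M₁ i j' : ℕ) : ℝ) ^ (-t)

lemma rpow_key (t : ℝ) (ht0 : 0 < t) (a k : ℝ) (ha : 1 ≤ a) (hk : 0 ≤ k) :
    |(a + k) ^ (-t) - a ^ (-t)| ≤ t * k * a ^ (-t - 1) := by
  have ha0 : (0:ℝ) < a := lt_of_lt_of_le one_pos ha
  have key := (convex_Icc a (a + k)).norm_image_sub_le_of_norm_hasDerivWithin_le
    (f := fun x : ℝ => x ^ (-t)) (f' := fun x : ℝ => -t * x ^ (-t - 1))
    (C := t * a ^ (-t - 1)) (s := Set.Icc a (a + k))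
    (fun x hx => by
      have hx0 : (0:ℝ) < x := lt_of_lt_of_le ha0 hx.1
      exact (Real.hasDerivAt_rpow_const (Or.inl hx0.ne')).hasDerivWithinAt)
    (fun x hx => by
      have hx0 : (0:ℝ) < x := lt_of_lt_of_le ha0 hx.1
      have hle : x ^ (-t - 1) ≤ a ^ (-t - 1) :=
        Real.rpow_le_rpow_of_nonpos ha0 hx.1 (by linarith)
      have hnn : (0:ℝ) ≤ x ^ (-t - 1) := Real.rpow_nonneg hx0.le _
      rw [norm_mul, norm_neg, Real.norm_eq_abs, Real.norm_eq_abs,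
        abs_of_pos ht0, abs_of_nonneg hnn]
      exact mul_le_mul_of_nonneg_left hle ht0.le)
    (Set.left_mem_Icc.mpr (by linarith)) (Set.right_mem_Icc.mpr (by linarith))
  have : ‖(a + k) ^ (-t) - a ^ (-t)‖ ≤ t * a ^ (-t - 1) * ‖a + k - a‖ := key
  rw [Real.norm_eq_abs, Real.norm_eq_abs] at this
  have hk' : |a + k - a| = k := by rw [add_sub_cancel_left, abs_of_nonneg hk]
  rw [hk'] at this
  linarith

lemma nij_bound (t : ℝ) (ht0 : 0 < t) (n₀ M₁ M₂ i j : ℕ) (hn₀ : 1 ≤ n₀)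
    (hi : i < M₁) (hj : j < M₂) :
    |((nij n₀ M₁ i j : ℕ) : ℝ) ^ (-t) - (n₀ : ℝ) ^ (-t)| ≤
      t * ((M₁ : ℝ) * M₂) * (n₀ : ℝ) ^ (-t - 1) := by
  have hcast : ((nij n₀ M₁ i j : ℕ) : ℝ) = (n₀ : ℝ) + ((j * M₁ + i : ℕ) : ℝ) := by
    simp [nij]; push_cast; ring
  have hk : (0:ℝ) ≤ ((j * M₁ + i : ℕ) : ℝ) := Nat.cast_nonneg _
  have ha : (1:ℝ) ≤ (n₀ : ℝ) := by exact_mod_cast hn₀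
  have h1 := rpow_key t ht0 (n₀ : ℝ) ((j * M₁ + i : ℕ) : ℝ) ha hk
  rw [hcast]
  refine h1.trans ?_
  have hlt : (j * M₁ + i : ℕ) ≤ M₁ * M₂ := by
    calc j * M₁ + i ≤ j * M₁ + M₁ := by omega
    _ = (j + 1) * M₁ := by ring
    _ ≤ M₂ * M₁ := Nat.mul_le_mul_right _ hj
    _ = M₁ * M₂ := Nat.mul_comm _ _
  have : ((j * M₁ + i : ℕ) : ℝ) ≤ (M₁ : ℝ) * M₂ := by exact_mod_cast hlt
  have hpos : (0:ℝ) ≤ (n₀ : ℝ) ^ (-t - 1) := Real.rpow_nonneg (by positivity) _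
  gcongr

/-- Lattice approximation estimates for the corners `(x_{i,j}, y_{i,j})` of the
near-lattice packing. -/
theorem lattice_approximation (t : ℝ) (ht0 : 0 < t) (ht1 : t < 1)
    (n₀ M₁ M₂ : ℕ) (hn₀ : 1 ≤ n₀) (hM₁ : 1 ≤ M₁) (hM₂ : 1 ≤ M₂) (w : ℝ) :
    ∀ i j : ℕ, i < M₁ → j < M₂ →
      |xij t w n₀ M₁ i j - (w - ((M₁ : ℝ) - (i : ℝ)) * (n₀ : ℝ) ^ (-t))| ≤
        t * (M₁ : ℝ) ^ 2 * (M₂ : ℝ) * (n₀ : ℝ) ^ (-t - 1) ∧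
      |yij t n₀ M₁ i j - (j : ℝ) * (n₀ : ℝ) ^ (-t)| ≤
        t * (M₁ : ℝ) * (M₂ : ℝ) ^ 2 * (n₀ : ℝ) ^ (-t - 1) := by
  intro i j hi hj
  have hpos : (0:ℝ) ≤ (n₀ : ℝ) ^ (-t - 1) := Real.rpow_nonneg (by positivity) _
  constructor
  · have heq : xij t w n₀ M₁ i j - (w - ((M₁ : ℝ) - (i : ℝ)) * (n₀ : ℝ) ^ (-t)) =
        ∑ i' ∈ Finset.Ico i M₁, ((n₀ : ℝ) ^ (-t) - ((nij n₀ M₁ i' j : ℕ) : ℝ) ^ (-t)) := by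
      rw [Finset.sum_sub_distrib, Finset.sum_const, Nat.card_Ico, nsmul_eq_mul,
        Nat.cast_sub hi.le, xij]
      ring
    rw [heq]
    calc |∑ i' ∈ Finset.Ico i M₁, ((n₀ : ℝ) ^ (-t) - ((nij n₀ M₁ i' j : ℕ) : ℝ) ^ (-t))|
        ≤ ∑ i' ∈ Finset.Ico i M₁, |(n₀ : ℝ) ^ (-t) - ((nij n₀ M₁ i' j : ℕ) : ℝ) ^ (-t)| :=
          Finset.abs_sum_le_sum_abs _ _
      _ ≤ ∑ i' ∈ Finset.Ico i M₁, t * ((M₁ : ℝ) * M₂) * (n₀ : ℝ) ^ (-t - 1) := by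
          refine Finset.sum_le_sum fun i' hi' => ?_
          rw [abs_sub_comm]
          exact nij_bound t ht0 n₀ M₁ M₂ i' j hn₀ (Finset.mem_Ico.mp hi').2 hj
      _ = ((M₁ - i : ℕ) : ℝ) * (t * ((M₁ : ℝ) * M₂) * (n₀ : ℝ) ^ (-t - 1)) := by
          rw [Finset.sum_const, Nat.card_Ico, nsmul_eq_mul]
      _ ≤ t * (M₁ : ℝ) ^ 2 * (M₂ : ℝ) * (n₀ : ℝ) ^ (-t - 1) := by
          have h1 : ((M₁ - i : ℕ) : ℝ) ≤ (M₁ : ℝ) := by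
            exact_mod_cast Nat.sub_le M₁ i
          calc ((M₁ - i : ℕ) : ℝ) * (t * ((M₁ : ℝ) * M₂) * (n₀ : ℝ) ^ (-t - 1))
              ≤ (M₁ : ℝ) * (t * ((M₁ : ℝ) * M₂) * (n₀ : ℝ) ^ (-t - 1)) := by
                have hb : (0:ℝ) ≤ t * ((M₁ : ℝ) * M₂) * (n₀ : ℝ) ^ (-t - 1) := by positivity
                exact mul_le_mul_of_nonneg_right h1 hb
            _ = t * (M₁ : ℝ) ^ 2 * (M₂ : ℝ) * (n₀ : ℝ) ^ (-t - 1) := by ring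
  · have heq : yij t n₀ M₁ i j - (j : ℝ) * (n₀ : ℝ) ^ (-t) =
        ∑ j' ∈ Finset.range j, (((nij n₀ M₁ i j' : ℕ) : ℝ) ^ (-t) - (n₀ : ℝ) ^ (-t)) := by
      rw [Finset.sum_sub_distrib, Finset.sum_const, Finset.card_range, nsmul_eq_mul, yij]
    rw [heq]
    calc |∑ j' ∈ Finset.range j, (((nij n₀ M₁ i j' : ℕ) : ℝ) ^ (-t) - (n₀ : ℝ) ^ (-t))|
        ≤ ∑ j' ∈ Finset.range j, |((nij n₀ M₁ i j' : ℕ) : ℝ) ^ (-t) - (n₀ : ℝ) ^ (-t)| :=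
          Finset.abs_sum_le_sum_abs _ _
      _ ≤ ∑ j' ∈ Finset.range j, t * ((M₁ : ℝ) * M₂) * (n₀ : ℝ) ^ (-t - 1) := by
          refine Finset.sum_le_sum fun j' hj' => ?_
          exact nij_bound t ht0 n₀ M₁ M₂ i j' hn₀ hi
            ((Finset.mem_range.mp hj').trans hj)
      _ = (j : ℝ) * (t * ((M₁ : ℝ) * M₂) * (n₀ : ℝ) ^ (-t - 1)) := by
          rw [Finset.sum_const, Finset.card_range, nsmul_eq_mul]
      _ ≤ t * (M₁ : ℝ) * (M₂ : ℝ) ^ 2 * (n₀ : ℝ) ^ (-t - 1) := by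
          have h1 : (j : ℝ) ≤ (M₂ : ℝ) := by exact_mod_cast hj.le
          calc (j : ℝ) * (t * ((M₁ : ℝ) * M₂) * (n₀ : ℝ) ^ (-t - 1))
              ≤ (M₂ : ℝ) * (t * ((M₁ : ℝ) * M₂) * (n₀ : ℝ) ^ (-t - 1)) := by
                have hb : (0:ℝ) ≤ t * ((M₁ : ℝ) * M₂) * (n₀ : ℝ) ^ (-t - 1) := by positivity
                exact mul_le_mul_of_nonneg_right h1 hb
            _ = t * (M₁ : ℝ) * (M₂ : ℝ) ^ 2 * (n₀ : ℝ) ^ (-t - 1) := by ring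
end

section
/- Let 1/2 < t < 1 and let M₁, M₂ ≥ 1 be natural numbers. For a natural number n₀ ≥ 1 and a real number w, define for 0 ≤ i < M₁ and 0 ≤ j < M₂: n_{i,j} := n₀ + j·M₁ + i, x_{i,j} := w − ∑_{i'=i}^{M₁−1} n_{i',j}^{-t}, y_{i,j} := ∑_{j'=0}^{j−1} n_{i,j'}^{-t}, and the square S_{i,j} := [x_{i,j}, x_{i,j} + n_{i,j}^{-t}] × [y_{i,j}, y_{i,j} + n_{i,j}^{-t}]. Then: (a) for every n₀ ≥ 1, if w ≥ M₁·n₀^{-t} then every S_{i,j} is contained in [0, w] × [0, M₂·n₀^{-t}]; and (b) there exists a natural number N₀ (depending only on t, M₁, M₂) such that for every n₀ ≥ N₀ the squares S_{i,j}, over all 0 ≤ i < M₁ and 0 ≤ j < M₂, have pairwise disjoint interiors. -/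
open Set Finset

/-- The square `S_{i,j}` of sidelength `n_{i,j}^{-t}` with bottom-left corner
`(x_{i,j}, y_{i,j})`. -/
def Sij (t w : ℝ) (n₀ M₁ i j : ℕ) : Set (ℝ × ℝ) :=
  Set.Icc (xij t w n₀ M₁ i j) (xij t w n₀ M₁ i j + ((nij n₀ M₁ i j : ℕ) : ℝ) ^ (-t)) ×ˢ
  Set.Icc (yij t n₀ M₁ i j) (yij t n₀ M₁ i j + ((nij n₀ M₁ i j : ℕ) : ℝ) ^ (-t))

lemma f_nonneg (t : ℝ) (n : ℕ) : 0 ≤ ((n : ℕ) : ℝ) ^ (-t) :=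
  Real.rpow_nonneg (Nat.cast_nonneg n) _

lemma f_anti (t : ℝ) (ht : 0 < t) {a b : ℕ} (ha : 1 ≤ a) (hab : a ≤ b) :
    ((b : ℕ) : ℝ) ^ (-t) ≤ ((a : ℕ) : ℝ) ^ (-t) :=
  Real.rpow_le_rpow_of_nonpos (by exact_mod_cast ha) (by exact_mod_cast hab)
    (neg_nonpos.mpr ht.le)

lemma nij_mono (n₀ M₁ : ℕ) {a b p q : ℕ} (hab : a ≤ b) (hpq : p ≤ q) :
    nij n₀ M₁ a p ≤ nij n₀ M₁ b q := by
  unfold nij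
  have := Nat.mul_le_mul_right M₁ hpq
  omega

lemma nij_pos (n₀ M₁ i j : ℕ) (h : 1 ≤ n₀) : 1 ≤ nij n₀ M₁ i j := by
  unfold nij; omega

lemma nij_ge (n₀ M₁ i j : ℕ) : n₀ ≤ nij n₀ M₁ i j := by
  unfold nij; omega

/-- Monotonicity of the column sums. -/
lemma sum_x_mono (t : ℝ) (ht : 0 < t) (n₀ M₁ : ℕ) (h₀ : 1 ≤ n₀)
    {a b j j' : ℕ} (hab : a ≤ b) (hjj : j ≤ j') :
    ∑ i'' ∈ Finset.Ico b M₁, ((nij n₀ M₁ i'' j' : ℕ) : ℝ) ^ (-t) ≤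
    ∑ i'' ∈ Finset.Ico a M₁, ((nij n₀ M₁ i'' j : ℕ) : ℝ) ^ (-t) := by
  calc ∑ i'' ∈ Finset.Ico b M₁, ((nij n₀ M₁ i'' j' : ℕ) : ℝ) ^ (-t)
      ≤ ∑ i'' ∈ Finset.Ico b M₁, ((nij n₀ M₁ i'' j : ℕ) : ℝ) ^ (-t) :=
        Finset.sum_le_sum fun k _ =>
          f_anti t ht (nij_pos n₀ M₁ k j h₀) (nij_mono n₀ M₁ le_rfl hjj)
    _ ≤ ∑ i'' ∈ Finset.Ico a M₁, ((nij n₀ M₁ i'' j : ℕ) : ℝ) ^ (-t) :=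
        Finset.sum_le_sum_of_subset_of_nonneg (Finset.Ico_subset_Ico hab le_rfl)
          fun k _ _ => f_nonneg t _

/-- Monotonicity of the row sums. -/
lemma sum_y_mono (t : ℝ) (ht : 0 < t) (n₀ M₁ : ℕ) (h₀ : 1 ≤ n₀)
    {a b p q : ℕ} (hab : a ≤ b) (hpq : p ≤ q) :
    ∑ j'' ∈ Finset.range p, ((nij n₀ M₁ b j'' : ℕ) : ℝ) ^ (-t) ≤
    ∑ j'' ∈ Finset.range q, ((nij n₀ M₁ a j'' : ℕ) : ℝ) ^ (-t) := by
  calc ∑ j'' ∈ Finset.range p, ((nij n₀ M₁ b j'' : ℕ) : ℝ) ^ (-t)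
      ≤ ∑ j'' ∈ Finset.range p, ((nij n₀ M₁ a j'' : ℕ) : ℝ) ^ (-t) :=
        Finset.sum_le_sum fun k _ =>
          f_anti t ht (nij_pos n₀ M₁ a k h₀) (nij_mono n₀ M₁ hab le_rfl)
    _ ≤ ∑ j'' ∈ Finset.range q, ((nij n₀ M₁ a j'' : ℕ) : ℝ) ^ (-t) :=
        Finset.sum_le_sum_of_subset_of_nonneg (Finset.range_subset_range.mpr hpq)
          fun k _ _ => f_nonneg t _

/-- Disjointness of interiors from separation in the first coordinate. -/
lemma disj_x {a b c d a' b' c' d' : ℝ} (h : b ≤ a') :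
    Disjoint (interior (Set.Icc a b ×ˢ Set.Icc c d))
      (interior (Set.Icc a' b' ×ˢ Set.Icc c' d')) := by
  rw [interior_prod_eq, interior_prod_eq, interior_Icc, interior_Icc, interior_Icc,
    interior_Icc, Set.disjoint_left]
  intro p h1 h2
  simp only [Set.mem_prod, Set.mem_Ioo] at h1 h2
  linarith [h1.1.2, h2.1.1]

/-- Disjointness of interiors from separation in the second coordinate. -/
lemma disj_y {a b c d a' b' c' d' : ℝ} (h : d ≤ c') :
    Disjoint (interior (Set.Icc a b ×ˢ Set.Icc c d))
      (interior (Set.Icc a' b' ×ˢ Set.Icc c' d')) := by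
  rw [interior_prod_eq, interior_prod_eq, interior_Icc, interior_Icc, interior_Icc,
    interior_Icc, Set.disjoint_left]
  intro p h1 h2
  simp only [Set.mem_prod, Set.mem_Ioo] at h1 h2
  linarith [h1.2.2, h2.2.1]

lemma Sij_disj_x {t w : ℝ} {n₀ M₁ i j i' j' : ℕ}
    (h : xij t w n₀ M₁ i j + ((nij n₀ M₁ i j : ℕ) : ℝ) ^ (-t) ≤ xij t w n₀ M₁ i' j') :
    Disjoint (interior (Sij t w n₀ M₁ i j)) (interior (Sij t w n₀ M₁ i' j')) := by
  unfold Sij; exact disj_x h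

lemma Sij_disj_y {t w : ℝ} {n₀ M₁ i j i' j' : ℕ}
    (h : yij t n₀ M₁ i j + ((nij n₀ M₁ i j : ℕ) : ℝ) ^ (-t) ≤ yij t n₀ M₁ i' j') :
    Disjoint (interior (Sij t w n₀ M₁ i j)) (interior (Sij t w n₀ M₁ i' j')) := by
  unfold Sij; exact disj_y h

/-- The near-lattice placement is a packing: (a) each square `S_{i,j}` lies inside
`[0, w] × [0, M₂ n₀^{-t}]` whenever `w ≥ M₁ n₀^{-t}`; (b) for `n₀` large the squares
have pairwise disjoint interiors. -/
theorem near_lattice_packing (t : ℝ) (ht1 : 1 / 2 < t) (ht2 : t < 1)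
    (M₁ M₂ : ℕ) (hM₁ : 1 ≤ M₁) (hM₂ : 1 ≤ M₂) :
    (∀ (n₀ : ℕ) (w : ℝ), 1 ≤ n₀ → (M₁ : ℝ) * (n₀ : ℝ) ^ (-t) ≤ w →
      ∀ i j : ℕ, i < M₁ → j < M₂ →
        Sij t w n₀ M₁ i j ⊆
          Set.Icc 0 w ×ˢ Set.Icc 0 ((M₂ : ℝ) * (n₀ : ℝ) ^ (-t))) ∧
    (∃ N₀ : ℕ, ∀ (n₀ : ℕ) (w : ℝ), N₀ ≤ n₀ →
      ∀ i j i' j' : ℕ, i < M₁ → j < M₂ → i' < M₁ → j' < M₂ → (i, j) ≠ (i', j') →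
        Disjoint (interior (Sij t w n₀ M₁ i j))
          (interior (Sij t w n₀ M₁ i' j'))) := by
  have ht0 : 0 < t := by linarith
  constructor
  · -- part (a)
    intro n₀ w hn hw i j hi hj
    rintro ⟨p, q⟩ hp
    simp only [Sij, Set.mem_prod, Set.mem_Icc] at hp ⊢
    obtain ⟨⟨hx1, hx2⟩, hy1, hy2⟩ := hp
    -- bound for the sum over a column
    have hsum : ∀ k : ℕ, ∑ i'' ∈ Finset.Ico k M₁, ((nij n₀ M₁ i'' j : ℕ) : ℝ) ^ (-t)
        ≤ (M₁ : ℝ) * (n₀ : ℝ) ^ (-t) := by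
      intro k
      calc ∑ i'' ∈ Finset.Ico k M₁, ((nij n₀ M₁ i'' j : ℕ) : ℝ) ^ (-t)
          ≤ ∑ i'' ∈ Finset.Ico 0 M₁, ((nij n₀ M₁ i'' j : ℕ) : ℝ) ^ (-t) :=
            Finset.sum_le_sum_of_subset_of_nonneg
              (Finset.Ico_subset_Ico (Nat.zero_le k) le_rfl) fun _ _ _ => f_nonneg t _
        _ ≤ ∑ _i'' ∈ Finset.Ico 0 M₁, ((n₀ : ℕ) : ℝ) ^ (-t) :=
            Finset.sum_le_sum fun k _ => f_anti t ht0 hn (nij_ge n₀ M₁ k j)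
        _ = (M₁ : ℝ) * (n₀ : ℝ) ^ (-t) := by
            rw [Finset.sum_const, Nat.card_Ico, Nat.sub_zero, nsmul_eq_mul]
    have hx0 : 0 ≤ xij t w n₀ M₁ i j := by
      have := hsum i
      rw [xij]; linarith
    have hxw : xij t w n₀ M₁ i j + ((nij n₀ M₁ i j : ℕ) : ℝ) ^ (-t) ≤ w := by
      rw [xij, Finset.sum_eq_sum_Ico_succ_bot hi]
      have : 0 ≤ ∑ i'' ∈ Finset.Ico (i + 1) M₁, ((nij n₀ M₁ i'' j : ℕ) : ℝ) ^ (-t) :=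
        Finset.sum_nonneg fun _ _ => f_nonneg t _
      linarith
    have hy0 : 0 ≤ yij t n₀ M₁ i j :=
      Finset.sum_nonneg fun _ _ => f_nonneg t _
    have hyM : yij t n₀ M₁ i j + ((nij n₀ M₁ i j : ℕ) : ℝ) ^ (-t)
        ≤ (M₂ : ℝ) * (n₀ : ℝ) ^ (-t) := by
      have : yij t n₀ M₁ i j + ((nij n₀ M₁ i j : ℕ) : ℝ) ^ (-t)
          = ∑ j'' ∈ Finset.range (j + 1), ((nij n₀ M₁ i j'' : ℕ) : ℝ) ^ (-t) := by
        rw [yij, Finset.sum_range_succ]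
      rw [this]
      calc ∑ j'' ∈ Finset.range (j + 1), ((nij n₀ M₁ i j'' : ℕ) : ℝ) ^ (-t)
          ≤ ∑ _j'' ∈ Finset.range (j + 1), ((n₀ : ℕ) : ℝ) ^ (-t) :=
            Finset.sum_le_sum fun k _ => f_anti t ht0 hn (nij_ge n₀ M₁ i k)
        _ = ((j + 1 : ℕ) : ℝ) * (n₀ : ℝ) ^ (-t) := by
            rw [Finset.sum_const, Finset.card_range, nsmul_eq_mul]
        _ ≤ (M₂ : ℝ) * (n₀ : ℝ) ^ (-t) := by
            have h1 : ((j + 1 : ℕ) : ℝ) ≤ (M₂ : ℝ) := by exact_mod_cast hj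
            exact mul_le_mul_of_nonneg_right h1 (f_nonneg t n₀)
    exact ⟨⟨hx0.trans hx1, hx2.trans hxw⟩, hy0.trans hy1, hy2.trans hyM⟩
  · -- part (b)
    refine ⟨1, fun n₀ w hn i j i' j' hi hj hi' hj' hne => ?_⟩
    -- x-separation when i < i' and j ≤ j'
    have keyx : ∀ a b p q : ℕ, a < M₁ → a < b → p ≤ q →
        xij t w n₀ M₁ a p + ((nij n₀ M₁ a p : ℕ) : ℝ) ^ (-t) ≤ xij t w n₀ M₁ b q := by
      intro a b p q ha hab hpq
      have hm := sum_x_mono t ht0 n₀ M₁ hn (Nat.succ_le_of_lt hab) hpq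
      rw [xij, xij, Finset.sum_eq_sum_Ico_succ_bot ha]
      linarith
    -- y-separation when a ≥ b (column index) and p < q (row index)
    have keyy : ∀ a b p q : ℕ, b ≤ a → p < q →
        yij t n₀ M₁ a p + ((nij n₀ M₁ a p : ℕ) : ℝ) ^ (-t) ≤ yij t n₀ M₁ b q := by
      intro a b p q hba hpq
      have : yij t n₀ M₁ a p + ((nij n₀ M₁ a p : ℕ) : ℝ) ^ (-t)
          = ∑ j'' ∈ Finset.range (p + 1), ((nij n₀ M₁ a j'' : ℕ) : ℝ) ^ (-t) := by
        rw [yij, Finset.sum_range_succ]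
      rw [this, yij]
      exact sum_y_mono t ht0 n₀ M₁ hn hba (Nat.succ_le_of_lt hpq)
    rcases lt_trichotomy i i' with hii | hii | hii
    · rcases le_or_gt j j' with hjj | hjj
      · exact Sij_disj_x (keyx i i' j j' hi hii hjj)
      · exact (Sij_disj_y (keyy i' i j' j hii.le hjj)).symm
    · subst hii
      have hjne : j ≠ j' := fun h => hne (by rw [h])
      rcases hjne.lt_or_gt with hjj | hjj
      · exact Sij_disj_y (keyy i i j j' le_rfl hjj)
      · exact (Sij_disj_y (keyy i i j' j le_rfl hjj)).symm
    · rcases le_or_gt j' j with hjj | hjj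
      · exact (Sij_disj_x (keyx i' i j' j hi' hii hjj)).symm
      · exact Sij_disj_y (keyy i i' j j' hii.le hjj)
end

section
/- Let 1/2 < t < 1 and let M₁, M₂ ≥ 2 be natural numbers. For a natural number n₀ ≥ 1 and a real number w, define for 0 ≤ i < M₁ and 0 ≤ j < M₂: n_{i,j} := n₀ + j·M₁ + i, x_{i,j} := w − ∑_{i'=i}^{M₁−1} n_{i',j}^{-t}, y_{i,j} := ∑_{j'=0}^{j−1} n_{i,j'}^{-t}, and S_{i,j} := [x_{i,j}, x_{i,j} + n_{i,j}^{-t}] × [y_{i,j}, y_{i,j} + n_{i,j}^{-t}]. Then there exists a natural number N₀ (depending only on t, M₁, M₂) such that for every n₀ ≥ N₀ and all 0 ≤ i < M₁ − 1, 0 ≤ j < M₂ − 1, the following hold: the identities x_{i+1,j} = x_{i,j} + n_{i,j}^{-t}, y_{i,j+1} = y_{i,j} + n_{i,j}^{-t}, x_{i+1,j+1} = x_{i,j+1} + n_{i,j+1}^{-t}, y_{i+1,j+1} = y_{i+1,j} + n_{i+1,j}^{-t}; the strict inequalities y_{i,j} < y_{i+1,j} + n_{i+1,j}^{-t} < y_{i,j}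 + n_{i,j}^{-t}, x_{i,j} < x_{i,j+1} < x_{i,j} + n_{i,j}^{-t}, y_{i+1,j+1} < y_{i,j+1} < y_{i+1,j+1} + n_{i+1,j+1}^{-t}, x_{i+1,j} < x_{i+1,j+1} < x_{i+1,j} + n_{i+1,j}^{-t}; and the gap rectangle G_{i,j} := [x_{i+1,j}, x_{i+1,j+1}] × [y_{i+1,j+1}, y_{i,j+1}] has both sidelengths at most t·M₁²·M₂²·n₀^{-t-1} and has interior disjoint from the interiors of S_{i,j}, S_{i+1,j}, S_{i,j+1} and S_{i+1,j+1}. -/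
open Set Finset

private lemma aux_decr_le {t : ℝ} (ht0 : 0 < t) (ht1 : t ≤ 1) {x k : ℝ}
    (hx : 1 ≤ x) (hk : 0 ≤ k) :
    x ^ (-t) - (x + k) ^ (-t) ≤ t * k * x ^ (-t - 1) := by
  have hx0 : (0:ℝ) < x := lt_of_lt_of_le one_pos hx
  set u := k / x with hu_def
  have hu : 0 ≤ u := div_nonneg hk hx0.le
  have h1u : (0:ℝ) < 1 + u := by linarith
  have hb : (1 + u) ^ t ≤ 1 + t * u :=
    rpow_one_add_le_one_add_mul_self (by linarith) ht0.le ht1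
  have hbp : (0:ℝ) < (1 + u) ^ t := Real.rpow_pos_of_pos h1u t
  have htu : 0 ≤ t * u := mul_nonneg ht0.le hu
  have hber : 1 - t * u ≤ (1 + u) ^ (-t) := by
    rw [Real.rpow_neg h1u.le]
    rcases le_or_gt (1 - t * u) 0 with h | h
    · exact h.trans (inv_nonneg.mpr hbp.le)
    · rw [inv_eq_one_div, le_div_iff₀ hbp]
      nlinarith [mul_le_mul_of_nonneg_left hb h.le, sq_nonneg (t * u)]
  have key : x + k = x * (1 + u) := by rw [hu_def]; field_simp
  calc x ^ (-t) - (x + k) ^ (-t)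
      = x ^ (-t) * (1 - (1 + u) ^ (-t)) := by
        rw [key, Real.mul_rpow hx0.le h1u.le]; ring
    _ ≤ x ^ (-t) * (t * u) := by
        apply mul_le_mul_of_nonneg_left (by linarith) (Real.rpow_pos_of_pos hx0 _).le
    _ = t * k * x ^ (-t - 1) := by
        rw [show (-t - 1) = -t + (-1) by ring, Real.rpow_add hx0, Real.rpow_neg_one, hu_def]
        field_simp

private lemma term_bounds {t : ℝ} (ht0 : 0 < t) (ht1 : t ≤ 1) {n₀ n k : ℕ}
    (hn₀ : 1 ≤ n₀) (hn : n₀ ≤ n) (hk : 1 ≤ k) :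
    0 < ((n : ℕ):ℝ) ^ (-t) - ((n + k : ℕ):ℝ) ^ (-t) ∧
    ((n : ℕ):ℝ) ^ (-t) - ((n + k : ℕ):ℝ) ^ (-t) ≤ t * k * ((n₀ : ℕ):ℝ) ^ (-t - 1) := by
  have hn1 : (1:ℝ) ≤ (n:ℝ) := by exact_mod_cast hn₀.trans hn
  have hnpos : (0:ℝ) < n := by linarith
  have hcast : ((n + k : ℕ):ℝ) = (n:ℝ) + (k:ℝ) := by push_cast; ring
  have hk1 : (1:ℝ) ≤ (k:ℝ) := by exact_mod_cast hk
  constructor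
  · have h : ((n + k : ℕ):ℝ) ^ (-t) < (n:ℝ) ^ (-t) := by
      rw [hcast]
      exact Real.rpow_lt_rpow_of_neg hnpos (by linarith) (by linarith)
    linarith
  · have h1 : ((n:ℕ):ℝ) ^ (-t) - ((n + k : ℕ):ℝ) ^ (-t) ≤ t * k * (n:ℝ) ^ (-t - 1) := by
      rw [hcast]
      exact aux_decr_le ht0 ht1 hn1 (by positivity)
    have h2 : (n:ℝ) ^ (-t - 1) ≤ (n₀:ℝ) ^ (-t - 1) := by
      apply Real.rpow_le_rpow_of_nonpos (by exact_mod_cast hn₀) (by exact_mod_cast hn)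
      linarith
    calc ((n:ℕ):ℝ) ^ (-t) - ((n + k : ℕ):ℝ) ^ (-t) ≤ t * k * (n:ℝ) ^ (-t - 1) := h1
      _ ≤ t * k * (n₀:ℝ) ^ (-t - 1) := by
          apply mul_le_mul_of_nonneg_left h2 (by positivity)

private lemma ydiff_bounds {t : ℝ} (ht0 : 0 < t) (ht1 : t ≤ 1) (n₀ M₁ : ℕ)
    (hn₀ : 1 ≤ n₀) (i j : ℕ) :
    (0 < j → yij t n₀ M₁ (i + 1) j < yij t n₀ M₁ i j) ∧
    yij t n₀ M₁ i j - yij t n₀ M₁ (i + 1) j ≤ (j : ℝ) * (t * (n₀:ℝ) ^ (-t - 1)) := by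
  have hterm : ∀ j' : ℕ,
      0 < ((nij n₀ M₁ i j' : ℕ):ℝ) ^ (-t) - ((nij n₀ M₁ (i + 1) j' : ℕ):ℝ) ^ (-t) ∧
      ((nij n₀ M₁ i j' : ℕ):ℝ) ^ (-t) - ((nij n₀ M₁ (i + 1) j' : ℕ):ℝ) ^ (-t)
        ≤ t * (n₀:ℝ) ^ (-t - 1) := by
    intro j'
    have h : nij n₀ M₁ (i + 1) j' = nij n₀ M₁ i j' + 1 := by unfold nij; omega
    rw [h]
    have hle : n₀ ≤ nij n₀ M₁ i j' := by unfold nij; omega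
    have := term_bounds ht0 ht1 hn₀ hle le_rfl
    refine ⟨this.1, ?_⟩
    have h2 := this.2
    rw [Nat.cast_one, mul_one] at h2
    exact h2
  have hsub : yij t n₀ M₁ i j - yij t n₀ M₁ (i + 1) j
      = ∑ j' ∈ Finset.range j,
        (((nij n₀ M₁ i j' : ℕ):ℝ) ^ (-t) - ((nij n₀ M₁ (i + 1) j' : ℕ):ℝ) ^ (-t)) := by
    unfold yij; rw [Finset.sum_sub_distrib]
  constructor
  · intro hj
    rw [← sub_pos, hsub]
    exact Finset.sum_pos (fun j' _ => (hterm j').1) ⟨0, Finset.mem_range.mpr hj⟩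
  · rw [hsub]
    calc ∑ j' ∈ Finset.range j,
          (((nij n₀ M₁ i j' : ℕ):ℝ) ^ (-t) - ((nij n₀ M₁ (i + 1) j' : ℕ):ℝ) ^ (-t))
        ≤ ∑ _j' ∈ Finset.range j, t * (n₀:ℝ) ^ (-t - 1) :=
          Finset.sum_le_sum (fun j' _ => (hterm j').2)
      _ = (j : ℝ) * (t * (n₀:ℝ) ^ (-t - 1)) := by
          rw [Finset.sum_const, Finset.card_range, nsmul_eq_mul]

private lemma xdiff_bounds {t : ℝ} (ht0 : 0 < t) (ht1 : t ≤ 1) (w : ℝ) (n₀ M₁ : ℕ)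
    (hn₀ : 1 ≤ n₀) (hM₁ : 1 ≤ M₁) (i j : ℕ) (hi : i < M₁) :
    (xij t w n₀ M₁ i j < xij t w n₀ M₁ i (j + 1)) ∧
    xij t w n₀ M₁ i (j + 1) - xij t w n₀ M₁ i j
      ≤ (M₁ : ℝ) * (t * (M₁ : ℝ) * (n₀:ℝ) ^ (-t - 1)) := by
  have hterm : ∀ i' : ℕ,
      0 < ((nij n₀ M₁ i' j : ℕ):ℝ) ^ (-t) - ((nij n₀ M₁ i' (j + 1) : ℕ):ℝ) ^ (-t) ∧
      ((nij n₀ M₁ i' j : ℕ):ℝ) ^ (-t) - ((nij n₀ M₁ i' (j + 1) : ℕ):ℝ) ^ (-t)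
        ≤ t * (M₁ : ℝ) * (n₀:ℝ) ^ (-t - 1) := by
    intro i'
    have h : nij n₀ M₁ i' (j + 1) = nij n₀ M₁ i' j + M₁ := by unfold nij; ring
    rw [h]
    have hle : n₀ ≤ nij n₀ M₁ i' j := by unfold nij; omega
    have := term_bounds ht0 ht1 hn₀ hle hM₁
    exact ⟨this.1, by linarith [this.2]⟩
  have hsub : xij t w n₀ M₁ i (j + 1) - xij t w n₀ M₁ i j
      = ∑ i' ∈ Finset.Ico i M₁,
        (((nij n₀ M₁ i' j : ℕ):ℝ) ^ (-t) - ((nij n₀ M₁ i' (j + 1) : ℕ):ℝ) ^ (-t)) := by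
    unfold xij; rw [Finset.sum_sub_distrib]; ring
  constructor
  · rw [← sub_pos, hsub]
    exact Finset.sum_pos (fun i' _ => (hterm i').1) ⟨i, Finset.mem_Ico.mpr ⟨le_rfl, hi⟩⟩
  · rw [hsub]
    have hbnd : (0:ℝ) ≤ t * (M₁ : ℝ) * (n₀:ℝ) ^ (-t - 1) := by positivity
    calc ∑ i' ∈ Finset.Ico i M₁,
          (((nij n₀ M₁ i' j : ℕ):ℝ) ^ (-t) - ((nij n₀ M₁ i' (j + 1) : ℕ):ℝ) ^ (-t))
        ≤ ∑ _i' ∈ Finset.Ico i M₁, t * (M₁ : ℝ) * (n₀:ℝ) ^ (-t - 1) :=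
          Finset.sum_le_sum (fun i' _ => (hterm i').2)
      _ = ((M₁ - i : ℕ) : ℝ) * (t * (M₁ : ℝ) * (n₀:ℝ) ^ (-t - 1)) := by
          rw [Finset.sum_const, Nat.card_Ico, nsmul_eq_mul]
      _ ≤ (M₁ : ℝ) * (t * (M₁ : ℝ) * (n₀:ℝ) ^ (-t - 1)) := by
          apply mul_le_mul_of_nonneg_right _ hbnd
          exact_mod_cast Nat.sub_le M₁ i

private lemma side_lower {t : ℝ} (ht0 : 0 < t) (ht1 : t ≤ 1) (n₀ M₁ M₂ i j : ℕ)
    (hn₀ : 1 ≤ n₀) (hi : i < M₁) (hj : j < M₂) :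
    ((M₁ * M₂ + 1 : ℕ):ℝ)⁻¹ * (n₀:ℝ) ^ (-t) ≤ ((nij n₀ M₁ i j : ℕ):ℝ) ^ (-t) := by
  have h1 : j * M₁ + i < M₂ * M₁ := by
    calc j * M₁ + i < j * M₁ + M₁ := by omega
      _ = (j + 1) * M₁ := by ring
      _ ≤ M₂ * M₁ := Nat.mul_le_mul_right _ hj
  have h2 : M₁ * M₂ ≤ M₁ * M₂ * n₀ := Nat.le_mul_of_pos_right _ hn₀
  have h3 : M₂ * M₁ = M₁ * M₂ := Nat.mul_comm _ _
  have hle : nij n₀ M₁ i j ≤ (M₁ * M₂ + 1) * n₀ := by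
    have hr : (M₁ * M₂ + 1) * n₀ = M₁ * M₂ * n₀ + n₀ := by ring
    unfold nij; rw [hr]; linarith
  have hpos : (0:ℝ) < ((nij n₀ M₁ i j : ℕ):ℝ) := by
    have : 1 ≤ nij n₀ M₁ i j := le_trans hn₀ (by unfold nij; omega)
    exact_mod_cast lt_of_lt_of_le Nat.zero_lt_one this
  have h5 : (((M₁ * M₂ + 1) * n₀ : ℕ):ℝ) ^ (-t) ≤ ((nij n₀ M₁ i j : ℕ):ℝ) ^ (-t) :=
    Real.rpow_le_rpow_of_nonpos hpos (by exact_mod_cast hle) (by linarith)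
  refine le_trans ?_ h5
  have hcR : (1:ℝ) ≤ (M₁:ℝ) * (M₂:ℝ) + 1 := by
    have : (0:ℝ) ≤ (M₁:ℝ) * (M₂:ℝ) := by positivity
    linarith
  push_cast
  rw [Real.mul_rpow (by linarith) (by positivity)]
  apply mul_le_mul_of_nonneg_right _ (Real.rpow_nonneg (by positivity) _)
  rw [← Real.rpow_neg_one ((M₁:ℝ) * (M₂:ℝ) + 1)]
  exact Real.rpow_le_rpow_of_exponent_le hcR (by linarith)

private lemma gap_lt {t : ℝ} (ht0 : 0 < t) (ht2 : t < 1) (n₀ c K : ℕ)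
    (hK : 1 ≤ K) (hc : 1 ≤ c) (hn : K * c ≤ n₀) :
    (K:ℝ) * (t * (n₀:ℝ) ^ (-t - 1)) < ((c : ℕ):ℝ)⁻¹ * (n₀:ℝ) ^ (-t) := by
  have hn₀ : 1 ≤ n₀ := le_trans (Nat.one_le_iff_ne_zero.mpr (by positivity)) hn
  have hn₀R : (1:ℝ) ≤ (n₀:ℝ) := by exact_mod_cast hn₀
  have hnpos : (0:ℝ) < (n₀:ℝ) := by linarith
  have hcR : (1:ℝ) ≤ (c:ℝ) := by exact_mod_cast hc
  have hcpos : (0:ℝ) < (c:ℝ) := by linarith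
  have hK1 : (1:ℝ) ≤ (K:ℝ) := by exact_mod_cast hK
  have hKc : (K:ℝ) * (c:ℝ) ≤ (n₀:ℝ) := by exact_mod_cast hn
  have hrw : (n₀:ℝ) ^ (-t - 1) = (n₀:ℝ) ^ (-t) * (n₀:ℝ)⁻¹ := by
    rw [show -t - 1 = -t + (-1) by ring, Real.rpow_add hnpos, Real.rpow_neg_one]
  rw [hrw]
  have hp : (0:ℝ) < (n₀:ℝ) ^ (-t) := Real.rpow_pos_of_pos hnpos _
  have key : (K:ℝ) * t * (n₀:ℝ)⁻¹ < ((c:ℝ))⁻¹ := by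
    rw [show (K:ℝ) * t * (n₀:ℝ)⁻¹ = ((K:ℝ) * t) / (n₀:ℝ) by ring, inv_eq_one_div,
      div_lt_div_iff₀ hnpos hcpos]
    nlinarith [mul_pos (lt_of_lt_of_le one_pos hK1) (lt_of_lt_of_le one_pos hcR)]
  calc (K:ℝ) * (t * ((n₀:ℝ) ^ (-t) * (n₀:ℝ)⁻¹))
      = ((K:ℝ) * t * (n₀:ℝ)⁻¹) * (n₀:ℝ) ^ (-t) := by ring
    _ < ((c:ℝ))⁻¹ * (n₀:ℝ) ^ (-t) := mul_lt_mul_of_pos_right key hp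

/-- The gap rectangle `G_{i,j} = [x_{i+1,j}, x_{i+1,j+1}] × [y_{i+1,j+1}, y_{i,j+1}]`
surrounded by the four squares `S_{i,j}, S_{i+1,j}, S_{i,j+1}, S_{i+1,j+1}`. -/
def Gij (t w : ℝ) (n₀ M₁ i j : ℕ) : Set (ℝ × ℝ) :=
  Set.Icc (xij t w n₀ M₁ (i + 1) j) (xij t w n₀ M₁ (i + 1) (j + 1)) ×ˢ
  Set.Icc (yij t n₀ M₁ (i + 1) (j + 1)) (yij t n₀ M₁ i (j + 1))

set_option maxHeartbeats 1600000

/-- Adjacency relations among the four squares `S_{i,j}, S_{i+1,j}, S_{i,j+1},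
S_{i+1,j+1}` of the near-lattice packing, and the smallness of the gap rectangle
they surround. -/
theorem adjacency_relations (t : ℝ) (ht1 : 1 / 2 < t) (ht2 : t < 1)
    (M₁ M₂ : ℕ) (hM₁ : 2 ≤ M₁) (hM₂ : 2 ≤ M₂) :
    ∃ N₀ : ℕ, ∀ (n₀ : ℕ) (w : ℝ), N₀ ≤ n₀ →
      ∀ i j : ℕ, i + 1 < M₁ → j + 1 < M₂ →
        -- identities
        (xij t w n₀ M₁ (i + 1) j =
          xij t w n₀ M₁ i j + ((nij n₀ M₁ i j : ℕ) : ℝ) ^ (-t)) ∧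
        (yij t n₀ M₁ i (j + 1) =
          yij t n₀ M₁ i j + ((nij n₀ M₁ i j : ℕ) : ℝ) ^ (-t)) ∧
        (xij t w n₀ M₁ (i + 1) (j + 1) =
          xij t w n₀ M₁ i (j + 1) + ((nij n₀ M₁ i (j + 1) : ℕ) : ℝ) ^ (-t)) ∧
        (yij t n₀ M₁ (i + 1) (j + 1) =
          yij t n₀ M₁ (i + 1) j + ((nij n₀ M₁ (i + 1) j : ℕ) : ℝ) ^ (-t)) ∧
        -- strict inequalities
        (yij t n₀ M₁ i j <
          yij t n₀ M₁ (i + 1) j + ((nij n₀ M₁ (i + 1) j : ℕ) : ℝ) ^ (-t)) ∧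
        (yij t n₀ M₁ (i + 1) j + ((nij n₀ M₁ (i + 1) j : ℕ) : ℝ) ^ (-t) <
          yij t n₀ M₁ i j + ((nij n₀ M₁ i j : ℕ) : ℝ) ^ (-t)) ∧
        (xij t w n₀ M₁ i j < xij t w n₀ M₁ i (j + 1)) ∧
        (xij t w n₀ M₁ i (j + 1) <
          xij t w n₀ M₁ i j + ((nij n₀ M₁ i j : ℕ) : ℝ) ^ (-t)) ∧
        (yij t n₀ M₁ (i + 1) (j + 1) < yij t n₀ M₁ i (j + 1)) ∧
        (yij t n₀ M₁ i (j + 1) <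
          yij t n₀ M₁ (i + 1) (j + 1) +
            ((nij n₀ M₁ (i + 1) (j + 1) : ℕ) : ℝ) ^ (-t)) ∧
        (xij t w n₀ M₁ (i + 1) j < xij t w n₀ M₁ (i + 1) (j + 1)) ∧
        (xij t w n₀ M₁ (i + 1) (j + 1) <
          xij t w n₀ M₁ (i + 1) j + ((nij n₀ M₁ (i + 1) j : ℕ) : ℝ) ^ (-t)) ∧
        -- smallness of the gap rectangle
        (xij t w n₀ M₁ (i + 1) (j + 1) - xij t w n₀ M₁ (i + 1) j ≤
          t * (M₁ : ℝ) ^ 2 * (M₂ : ℝ) ^ 2 * (n₀ : ℝ) ^ (-t - 1)) ∧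
        (yij t n₀ M₁ i (j + 1) - yij t n₀ M₁ (i + 1) (j + 1) ≤
          t * (M₁ : ℝ) ^ 2 * (M₂ : ℝ) ^ 2 * (n₀ : ℝ) ^ (-t - 1)) ∧
        -- the gap rectangle has interior disjoint from the four squares
        Disjoint (interior (Gij t w n₀ M₁ i j)) (interior (Sij t w n₀ M₁ i j)) ∧
        Disjoint (interior (Gij t w n₀ M₁ i j)) (interior (Sij t w n₀ M₁ (i + 1) j)) ∧
        Disjoint (interior (Gij t w n₀ M₁ i j)) (interior (Sij t w n₀ M₁ i (j + 1))) ∧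
        Disjoint (interior (Gij t w n₀ M₁ i j))
          (interior (Sij t w n₀ M₁ (i + 1) (j + 1))) := by
  have ht0 : 0 < t := by linarith
  have ht1' : t ≤ 1 := ht2.le
  refine ⟨(M₁ * M₁ + M₂) * (M₁ * M₂ + 1), ?_⟩
  intro n₀ w hn₀ i j hi hj
  have hM₁1 : 1 ≤ M₁ := by omega
  have hN₀pos : 0 < (M₁ * M₁ + M₂) * (M₁ * M₂ + 1) :=
    Nat.mul_pos (by omega) (Nat.succ_pos _)
  have hn₀1 : 1 ≤ n₀ := le_trans hN₀pos hn₀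
  have hn₀R : (0:ℝ) ≤ (n₀:ℝ) := by positivity
  -- identities
  have id1 : ∀ i' j' : ℕ, i' < M₁ →
      xij t w n₀ M₁ (i' + 1) j' = xij t w n₀ M₁ i' j' + ((nij n₀ M₁ i' j' : ℕ):ℝ) ^ (-t) := by
    intro i' j' h
    unfold xij
    rw [Finset.sum_eq_sum_Ico_succ_bot (M := ℝ) h]
    ring
  have id2 : ∀ i' j' : ℕ,
      yij t n₀ M₁ i' (j' + 1) = yij t n₀ M₁ i' j' + ((nij n₀ M₁ i' j' : ℕ):ℝ) ^ (-t) := by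
    intro i' j'
    unfold yij
    rw [Finset.sum_range_succ]
  -- numeric preparations
  have hc1 : 1 ≤ M₁ * M₂ + 1 := Nat.le_add_left 1 (M₁ * M₂)
  have hKM₂ : M₂ * (M₁ * M₂ + 1) ≤ (M₁ * M₁ + M₂) * (M₁ * M₂ + 1) :=
    Nat.mul_le_mul_right _ (Nat.le_add_left M₂ _)
  have hKM₁ : M₁ * M₁ * (M₁ * M₂ + 1) ≤ (M₁ * M₁ + M₂) * (M₁ * M₂ + 1) :=
    Nat.mul_le_mul_right _ (Nat.le_add_right _ M₂)
  have hM₁sq1 : 1 ≤ M₁ * M₁ := by simpa using Nat.mul_le_mul hM₁1 hM₁1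
  have hgapy := gap_lt ht0 ht2 n₀ (M₁ * M₂ + 1) M₂ (by omega) hc1 (le_trans hKM₂ hn₀)
  have hgapx := gap_lt ht0 ht2 n₀ (M₁ * M₂ + 1) (M₁ * M₁) hM₁sq1 hc1 (le_trans hKM₁ hn₀)
  have hyd0 := ydiff_bounds ht0 ht1' n₀ M₁ hn₀1 i j
  have hyd1 := ydiff_bounds ht0 ht1' n₀ M₁ hn₀1 i (j + 1)
  have hxd0 := xdiff_bounds ht0 ht1' w n₀ M₁ hn₀1 hM₁1 i j (by omega)
  have hxd1 := xdiff_bounds ht0 ht1' w n₀ M₁ hn₀1 hM₁1 (i + 1) j hi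
  have hlow_ij := side_lower ht0 ht1' n₀ M₁ M₂ i j hn₀1 (by omega) (by omega)
  have hlow_i1j := side_lower ht0 ht1' n₀ M₁ M₂ (i + 1) j hn₀1 hi (by omega)
  have hlow_i1j1 := side_lower ht0 ht1' n₀ M₁ M₂ (i + 1) (j + 1) hn₀1 hi hj
  have B0 : (0:ℝ) ≤ t * (n₀:ℝ) ^ (-t - 1) := by positivity
  have hjM₂ : ((j:ℝ)) ≤ (M₂:ℝ) := by exact_mod_cast (by omega : j ≤ M₂)
  have hj1M₂ : ((j:ℝ) + 1) ≤ (M₂:ℝ) := by exact_mod_cast (by omega : j + 1 ≤ M₂)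
  have h5a : yij t n₀ M₁ i j - yij t n₀ M₁ (i + 1) j ≤ (M₂:ℝ) * (t * (n₀:ℝ) ^ (-t - 1)) :=
    le_trans hyd0.2 (mul_le_mul_of_nonneg_right hjM₂ B0)
  have h10a : yij t n₀ M₁ i (j + 1) - yij t n₀ M₁ (i + 1) (j + 1)
      ≤ (M₂:ℝ) * (t * (n₀:ℝ) ^ (-t - 1)) := by
    refine le_trans hyd1.2 (mul_le_mul_of_nonneg_right ?_ B0)
    push_cast
    exact hj1M₂
  have h8a : xij t w n₀ M₁ i (j + 1) - xij t w n₀ M₁ i j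
      ≤ ((M₁ * M₁ : ℕ):ℝ) * (t * (n₀:ℝ) ^ (-t - 1)) := by
    refine le_trans hxd0.2 (le_of_eq ?_)
    push_cast
    ring
  have h12a : xij t w n₀ M₁ (i + 1) (j + 1) - xij t w n₀ M₁ (i + 1) j
      ≤ ((M₁ * M₁ : ℕ):ℝ) * (t * (n₀:ℝ) ^ (-t - 1)) := by
    refine le_trans hxd1.2 (le_of_eq ?_)
    push_cast
    ring
  have hM₂R : (2:ℝ) ≤ (M₂:ℝ) := by exact_mod_cast hM₂
  have hM₁R : (2:ℝ) ≤ (M₁:ℝ) := by exact_mod_cast hM₁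
  have hM₂sq : (1:ℝ) ≤ (M₂:ℝ) ^ 2 := by nlinarith
  refine ⟨id1 i j (by omega), id2 i j, id1 i (j + 1) (by omega), id2 (i + 1) j, ?_, ?_,
    hxd0.1, ?_, hyd1.1 (Nat.succ_pos j), ?_, hxd1.1, ?_, ?_, ?_, ?_, ?_, ?_, ?_⟩
  · -- (5)
    linarith [hgapy, hlow_i1j, h5a]
  · -- (6)
    rw [← id2 (i + 1) j, ← id2 i j]
    exact hyd1.1 (Nat.succ_pos j)
  · -- (8)
    linarith [hgapx, hlow_ij, h8a]
  · -- (10)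
    linarith [hgapy, hlow_i1j1, h10a]
  · -- (12)
    linarith [hgapx, hlow_i1j, h12a]
  · -- smallness x
    have hA : (0:ℝ) ≤ t * (M₁:ℝ) ^ 2 * (n₀:ℝ) ^ (-t - 1) := by positivity
    calc xij t w n₀ M₁ (i + 1) (j + 1) - xij t w n₀ M₁ (i + 1) j
        ≤ ((M₁ * M₁ : ℕ):ℝ) * (t * (n₀:ℝ) ^ (-t - 1)) := h12a
      _ = t * (M₁:ℝ) ^ 2 * (n₀:ℝ) ^ (-t - 1) * 1 := by push_cast; ring
      _ ≤ t * (M₁:ℝ) ^ 2 * (n₀:ℝ) ^ (-t - 1) * (M₂:ℝ) ^ 2 :=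
          mul_le_mul_of_nonneg_left hM₂sq hA
      _ = t * (M₁:ℝ) ^ 2 * (M₂:ℝ) ^ 2 * (n₀:ℝ) ^ (-t - 1) := by ring
  · -- smallness y
    have htX : (0:ℝ) ≤ t * (n₀:ℝ) ^ (-t - 1) := B0
    have hM : (M₂:ℝ) ≤ (M₁:ℝ) ^ 2 * (M₂:ℝ) ^ 2 := by
      have ha : (4:ℝ) ≤ (M₁:ℝ) ^ 2 := by nlinarith
      have hb : (M₂:ℝ) * 2 ≤ (M₂:ℝ) ^ 2 := by nlinarith
      have hc := mul_le_mul_of_nonneg_right ha (sq_nonneg (M₂:ℝ))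
      linarith [hc, hb, hM₂R]
    calc yij t n₀ M₁ i (j + 1) - yij t n₀ M₁ (i + 1) (j + 1)
        ≤ (M₂:ℝ) * (t * (n₀:ℝ) ^ (-t - 1)) := h10a
      _ ≤ ((M₁:ℝ) ^ 2 * (M₂:ℝ) ^ 2) * (t * (n₀:ℝ) ^ (-t - 1)) :=
          mul_le_mul_of_nonneg_right hM htX
      _ = t * (M₁:ℝ) ^ 2 * (M₂:ℝ) ^ 2 * (n₀:ℝ) ^ (-t - 1) := by ring
  · -- disjoint from S_{i,j}
    unfold Gij Sij
    rw [interior_prod_eq, interior_prod_eq]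
    simp only [interior_Icc]
    apply Disjoint.set_prod_left
    rw [← id1 i j (by omega), Set.Ioo_disjoint_Ioo]
    exact le_trans (min_le_right _ _) (le_max_left _ _)
  · -- disjoint from S_{i+1,j}
    unfold Gij Sij
    rw [interior_prod_eq, interior_prod_eq]
    simp only [interior_Icc]
    apply Disjoint.set_prod_right
    rw [← id2 (i + 1) j, Set.Ioo_disjoint_Ioo]
    exact le_trans (min_le_right _ _) (le_max_left _ _)
  · -- disjoint from S_{i,j+1}
    unfold Gij Sij
    rw [interior_prod_eq, interior_prod_eq]
    simp only [interior_Icc]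
    apply Disjoint.set_prod_right
    rw [Set.Ioo_disjoint_Ioo]
    exact le_trans (min_le_left _ _) (le_max_right _ _)
  · -- disjoint from S_{i+1,j+1}
    unfold Gij Sij
    rw [interior_prod_eq, interior_prod_eq]
    simp only [interior_Icc]
    apply Disjoint.set_prod_left
    rw [Set.Ioo_disjoint_Ioo]
    exact le_trans (min_le_left _ _) (le_max_right _ _)
end

section
/- Let 1/2 < t < 1 and set δ := 1 − t. Then there exists a constant c > 0 (depending only on t) with the following property: for every real M ≥ 1 and every natural number n₀ ≥ 2, if ℛ is a finite family of rectangles with strictly positive widths w(R) and heights h(R) ≥ w(R) satisfying ∑_{R∈ℛ} w(R)·h(R) ≥ ∑_{n=n₀}^∞ n^{-2t} and ∑_{R∈ℛ} w(R)^δ·h(R) ≤ M^{-1+δ/2} · ∑_{n=1}^{n₀−1} n^{-(t+δt)}, then there exists R ∈ ℛ with w(R) ≥ c·M^{1+δ/2}·n₀^{-t}. -/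
open Finset

private lemma aux_sum_rpow {p : ℝ} (hp0 : 0 < p) (hp1 : p < 1) (N : ℕ) :
    ∑ n ∈ Finset.range N, ((n : ℝ) + 1) ^ (-p) ≤ (N : ℝ) ^ (1 - p) / (1 - p) := by
  have h1p : (0:ℝ) < 1 - p := by linarith
  induction N with
  | zero => simp [Real.zero_rpow (by linarith : (1:ℝ) - p ≠ 0)]
  | succ N ih =>
    rw [Finset.sum_range_succ]
    set x : ℝ := (N : ℝ) + 1 with hxdef
    have hx : 0 < x := by positivity
    have hB : (0:ℝ) < x ^ (-p) := Real.rpow_pos_of_pos hx _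
    have hxe : x ^ (1 - p) = x * x ^ (-p) := by
      rw [show (1:ℝ) - p = 1 + (-p) from by ring, Real.rpow_add hx, Real.rpow_one]
    have hxinv : 1/x ≤ 1 := by
      rw [div_le_one hx]; simp [hxdef]
    have hNx : (N : ℝ) = x * (1 + (-(1/x))) := by
      field_simp
      rw [hxdef]; ring
    have hbern : (1 + (-(1/x))) ^ (1 - p) ≤ 1 + (1-p) * (-(1/x)) :=
      rpow_one_add_le_one_add_mul_self (by linarith) h1p.le (by linarith)
    have hNe : (N : ℝ) ^ (1 - p) ≤ x ^ (1-p) * (1 + (1-p) * (-(1/x))) := by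
      rw [hNx, mul_comm x (1 + (-(1/x))), Real.mul_rpow (by linarith) hx.le]
      rw [mul_comm]
      exact mul_le_mul_of_nonneg_left hbern (Real.rpow_nonneg hx.le _)
    have hNe' : (N : ℝ) ^ (1 - p) ≤ x * x^(-p) - (1-p) * x^(-p) := by
      have heq : x ^ (1-p) * (1 + (1-p) * (-(1/x))) = x * x^(-p) - (1-p) * x^(-p) := by
        rw [hxe]; field_simp; ring
      rw [heq] at hNe; exact hNe
    have hih : (∑ n ∈ Finset.range N, ((n : ℝ) + 1) ^ (-p)) * (1-p) ≤ (N:ℝ)^(1-p) := by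
      rw [← le_div_iff₀ h1p]; exact ih
    have hcast : ((N + 1 : ℕ) : ℝ) = x := by push_cast; rfl
    rw [hcast, le_div_iff₀ h1p, hxe]
    nlinarith [hB]

/-- Key pigeonhole step of the downward induction: for `1/2 < t < 1` and `δ = 1 - t`
there is `c > 0` such that for all `M ≥ 1` and `n₀ ≥ 2`, any finite family of
rectangles (widths `w ≤ h` heights, both positive) of total area at least
`∑_{n ≥ n₀} n^{-2t}` and weighted total perimeter at most
`M^{-1+δ/2} ∑_{n=1}^{n₀-1} n^{-(t+δt)}` contains a rectangle of width at least
`c M^{1+δ/2} n₀^{-t}`. -/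
theorem exists_wide_rectangle (t : ℝ) (ht1 : 1 / 2 < t) (ht2 : t < 1) :
    ∃ c : ℝ, 0 < c ∧
      ∀ M : ℝ, 1 ≤ M → ∀ n₀ : ℕ, 2 ≤ n₀ →
      ∀ (ι : Type) (s : Finset ι) (w h : ι → ℝ),
        (∀ i ∈ s, 0 < w i) → (∀ i ∈ s, w i ≤ h i) →
        ((∑' n : ℕ, ((n₀ + n : ℕ) : ℝ) ^ (-(2 * t))) ≤ ∑ i ∈ s, w i * h i) →
        (∑ i ∈ s, w i ^ (1 - t) * h i ≤
          M ^ (-1 + (1 - t) / 2) *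
            ∑ n ∈ Finset.Ico 1 n₀, (n : ℝ) ^ (-(t + (1 - t) * t))) →
        ∃ i ∈ s, c * M ^ (1 + (1 - t) / 2) * (n₀ : ℝ) ^ (-t) ≤ w i := by
  have ht0 : 0 < t := by linarith
  set p : ℝ := t + (1 - t) * t with hpdef
  have hp0 : 0 < p := by nlinarith
  have hp1 : p < 1 := by nlinarith
  have h1p : (0:ℝ) < 1 - p := by linarith
  set K : ℝ := (2:ℝ) ^ (-(2*t)) * (1 - p) with hKdef
  have h2pow : (0:ℝ) < (2:ℝ) ^ (-(2*t)) := Real.rpow_pos_of_pos two_pos _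
  have hK : 0 < K := by rw [hKdef]; positivity
  refine ⟨K ^ t⁻¹, Real.rpow_pos_of_pos hK _, ?_⟩
  intro M hM n₀ hn₀ ι s w h hw hwh harea hper
  have hc0 : 0 < K ^ t⁻¹ := Real.rpow_pos_of_pos hK _
  have hM0 : (0:ℝ) < M := by linarith
  set a : ℝ := (n₀ : ℝ) with hadef
  have ha2 : (2:ℝ) ≤ a := by rw [hadef]; exact_mod_cast hn₀
  have ha0 : (0:ℝ) < a := by linarith
  -- tsum lower bound
  have hsummable : Summable (fun n : ℕ => ((n₀ + n : ℕ) : ℝ) ^ (-(2 * t))) := by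
    have h1 : Summable (fun n : ℕ => ((n : ℝ)) ^ (-(2 * t))) :=
      Real.summable_nat_rpow.mpr (by linarith)
    have h2 := (summable_nat_add_iff n₀).mpr h1
    simpa [add_comm] using h2
  have hlow : a * ((2 * a) ^ (-(2*t))) ≤ ∑' n : ℕ, ((n₀ + n : ℕ) : ℝ) ^ (-(2 * t)) := by
    have h1 : ∀ n ∈ Finset.range n₀, (2*a)^(-(2*t)) ≤ ((n₀ + n : ℕ) : ℝ) ^ (-(2 * t)) := by
      intro n hn
      have hn' : (n:ℝ) < a := by
        rw [hadef]; exact_mod_cast Finset.mem_range.mp hn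
      refine Real.rpow_le_rpow_of_nonpos (by push_cast; linarith) (by push_cast; linarith)
        (by linarith)
    calc a * (2*a)^(-(2*t)) = ∑ _n ∈ Finset.range n₀, (2*a)^(-(2*t)) := by
          rw [Finset.sum_const, Finset.card_range, nsmul_eq_mul]
      _ ≤ ∑ n ∈ Finset.range n₀, ((n₀ + n : ℕ) : ℝ) ^ (-(2 * t)) := Finset.sum_le_sum h1
      _ ≤ _ := Summable.sum_le_tsum _ (fun i _ => Real.rpow_nonneg (by positivity) _) hsummable
  have hA0 : 0 < a * ((2 * a) ^ (-(2*t))) := by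
    have := Real.rpow_pos_of_pos (by linarith : (0:ℝ) < 2*a) (-(2*t))
    positivity
  have hne : s.Nonempty := by
    rcases s.eq_empty_or_nonempty with rfl | hne
    · simp only [Finset.sum_empty] at harea
      linarith
    · exact hne
  obtain ⟨i₀, hi₀s, hi₀⟩ := s.exists_max_image w hne
  refine ⟨i₀, hi₀s, ?_⟩
  have hW0 : 0 < w i₀ := hw i₀ hi₀s
  -- pigeonhole
  have hpig : ∑ i ∈ s, w i * h i ≤ w i₀ ^ t * ∑ i ∈ s, w i ^ (1-t) * h i := by
    rw [Finset.mul_sum]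
    apply Finset.sum_le_sum
    intro i hi
    have hwi := hw i hi
    have hhi : 0 ≤ h i := le_trans hwi.le (hwh i hi)
    have heq : w i * h i = w i ^ t * (w i ^ (1-t) * h i) := by
      rw [← mul_assoc, ← Real.rpow_add hwi]
      norm_num
    rw [heq]
    exact mul_le_mul_of_nonneg_right
      (Real.rpow_le_rpow hwi.le (hi₀ i hi) ht0.le)
      (mul_nonneg (Real.rpow_nonneg hwi.le _) hhi)
  -- harmonic-type sum upper bound
  have hS : ∑ n ∈ Finset.Ico 1 n₀, (n : ℝ) ^ (-p) ≤ a ^ (1-p) / (1-p) := by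
    rw [Finset.sum_Ico_eq_sum_range]
    have heq : ∀ i ∈ Finset.range (n₀ - 1), ((1 + i : ℕ) : ℝ) ^ (-p) = ((i:ℝ) + 1) ^ (-p) := by
      intro i _; push_cast; rw [add_comm]
    rw [Finset.sum_congr rfl heq]
    refine le_trans (aux_sum_rpow hp0 hp1 (n₀ - 1)) ?_
    gcongr
    rw [hadef]; exact_mod_cast Nat.sub_le n₀ 1

  have hper' : ∑ i ∈ s, w i ^ (1 - t) * h i ≤ M ^ (-1 + (1-t)/2) * (a ^ (1-p) / (1-p)) :=
    hper.trans (mul_le_mul_of_nonneg_left hS (Real.rpow_nonneg hM0.le _))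
  have hchain : a * (2*a)^(-(2*t)) ≤
      w i₀ ^ t * (M ^ (-1 + (1-t)/2) * (a ^ (1-p)/(1-p))) :=
    hlow.trans (harea.trans (hpig.trans
      (mul_le_mul_of_nonneg_left hper' (Real.rpow_nonneg hW0.le _))))
  -- conclude
  rw [← Real.rpow_le_rpow_iff (by positivity) hW0.le ht0]
  have hLHS : (K ^ t⁻¹ * M ^ (1+(1-t)/2) * a^(-t)) ^ t
      = K * M^((1+(1-t)/2)*t) * a^(-t*t) := by
    rw [Real.mul_rpow (by positivity) (Real.rpow_nonneg ha0.le _),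
        Real.mul_rpow hc0.le (Real.rpow_nonneg hM0.le _),
        ← Real.rpow_mul hK.le, inv_mul_cancel₀ ht0.ne', Real.rpow_one,
        ← Real.rpow_mul hM0.le, ← Real.rpow_mul ha0.le]
  rw [hLHS]
  have hB0 : 0 < M ^ (-1 + (1-t)/2) * (a ^ (1-p)/(1-p)) := by
    have h1 := Real.rpow_pos_of_pos hM0 (-1 + (1-t)/2)
    have h2 := Real.rpow_pos_of_pos ha0 (1-p)
    positivity
  refine le_of_mul_le_mul_right (le_trans ?_ hchain) hB0
  have hDBeq : K * M^((1+(1-t)/2)*t) * a^(-t*t) * (M ^ (-1 + (1-t)/2) * (a ^ (1-p)/(1-p)))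
      = 2^(-(2*t)) * (M^((1+(1-t)/2)*t + (-1+(1-t)/2)) * a^(1-2*t)) := by
    rw [hKdef,
        show (2:ℝ)^(-(2*t)) * (1-p) * M^((1+(1-t)/2)*t) * a^(-t*t)
              * (M^(-1+(1-t)/2) * (a^(1-p)/(1-p)))
            = (2:ℝ)^(-(2*t)) * ((M^((1+(1-t)/2)*t) * M^(-1+(1-t)/2))
              * ((a^(-t*t) * a^(1-p)) * ((1-p)/(1-p)))) from by ring,
        div_self h1p.ne', mul_one, ← Real.rpow_add hM0, ← Real.rpow_add ha0,
        show -t*t + (1-p) = 1-2*t from by rw [hpdef]; ring]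
  have hAeq : a * (2*a)^(-(2*t)) = 2^(-(2*t)) * a^(1-2*t) := by
    rw [Real.mul_rpow (by norm_num) ha0.le,
        show (1:ℝ)-2*t = 1 + (-(2*t)) from by ring, Real.rpow_add ha0, Real.rpow_one]
    ring
  rw [hDBeq, hAeq]
  have hMle : M ^ ((1+(1-t)/2)*t + (-1+(1-t)/2)) ≤ 1 :=
    Real.rpow_le_one_of_one_le_of_nonpos hM (by nlinarith)
  have hapos : (0:ℝ) < a^(1-2*t) := Real.rpow_pos_of_pos ha0 _
  exact mul_le_mul_of_nonneg_left (mul_le_of_le_one_left hapos.le hMle) h2pow.le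
end
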